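/- arXiv:1108.5647 — 3 statements merged into one kernel-verified Lean document; each statement's English description precedes it below -/
import Mathlib

section
/- Let k be a positive integer, let |φ_1⟩,…,|φ_k⟩ ∈ ℂ^N be orthonormal, and let |ψ_1⟩,…,|ψ_k⟩ be unit vectors with ‖|φ_i⟩ − |ψ_i⟩‖ ≤ η for each i. Let Y be the orthogonal projector onto span{|ψ_1⟩,…,|ψ_k⟩} and set X = (1/√k) Σ_i |φ_i⟩⟨φ_i|, Ȳ = Y/√(rank Y). Then ‖X − Ȳ‖_F ≤ √2 · η. -/
open Matrix

/-- The Frobenius norm of a complex matrix. -/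
noncomputable def frobNorm {m : Type*} [Fintype m] (A : Matrix m m ℂ) : ℝ :=
  Real.sqrt ((A * Aᴴ).trace.re)

private lemma trace_eq_rank_of_idem {n : ℕ} (Y : Matrix (Fin n) (Fin n) ℂ)
    (hYproj : Y * Y = Y) : Y.trace = (Y.rank : ℂ) := by
  have hproj : LinearMap.IsProj (LinearMap.range Y.mulVecLin) Y.mulVecLin := by
    constructor
    · intro x; exact LinearMap.mem_range_self _ x
    · rintro x ⟨y, rfl⟩
      show (Y.mulVecLin ∘ₗ Y.mulVecLin) y = _
      rw [← Matrix.mulVecLin_mul, hYproj]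
  have h := hproj.trace
  rw [LinearMap.trace_eq_matrix_trace ℂ (Pi.basisFun ℂ (Fin n))] at h
  have hm : (LinearMap.toMatrix (Pi.basisFun ℂ (Fin n)) (Pi.basisFun ℂ (Fin n))) Y.mulVecLin = Y := by
    ext a b
    simp [LinearMap.toMatrix_apply, Matrix.mulVecLin_apply, Matrix.mulVec, dotProduct, Pi.single_apply]
  rw [hm] at h
  exact h

private lemma cs_bound {N : ℕ} (x w : Fin N → ℂ) (hx : ∑ l, Complex.normSq (x l) = 1) :
    ‖∑ l, star (x l) * w l‖ ^ 2 ≤ ∑ l, Complex.normSq (w l) := by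
  let x' : EuclideanSpace ℂ (Fin N) := (WithLp.equiv 2 _).symm x
  let w' : EuclideanSpace ℂ (Fin N) := (WithLp.equiv 2 _).symm w
  have hinner : inner ℂ x' w' = ∑ l, star (x l) * w l := by
    simp [PiLp.inner_apply, x', w', RCLike.inner_apply, mul_comm]
  have hxn : ‖x'‖ = 1 := by
    rw [EuclideanSpace.norm_eq]
    have : ∑ l, ‖x l‖ ^ 2 = 1 := by
      simpa [Complex.sq_norm] using hx
    simp only [WithLp.equiv_symm_apply, WithLp.ofLp_toLp, x']
    rw [this, Real.sqrt_one]
  have hwn : ‖w'‖ ^ 2 = ∑ l, Complex.normSq (w l) := by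
    rw [EuclideanSpace.norm_eq, Real.sq_sqrt (by positivity)]
    simp [Complex.sq_norm, w']
  have hcs := norm_inner_le_norm (𝕜 := ℂ) x' w'
  rw [hinner, hxn, one_mul] at hcs
  calc ‖∑ l, star (x l) * w l‖ ^ 2 ≤ ‖w'‖ ^ 2 := by
        apply pow_le_pow_left₀ (by positivity) hcs
      _ = _ := hwn

private lemma trace_PP {N k : ℕ} (φ : Fin k → (Fin N → ℂ))
    (hortho : ∀ i j, ∑ l, (starRingEnd ℂ) (φ i l) * φ j l = if i = j then 1 else 0)
    (i j : Fin k) :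
    ((vecMulVec (φ i) (star (φ i))) * (vecMulVec (φ j) (star (φ j)))ᴴ).trace
      = if i = j then 1 else 0 := by
  have expand : ((vecMulVec (φ i) (star (φ i))) * (vecMulVec (φ j) (star (φ j)))ᴴ).trace
      = (∑ a, φ i a * star (φ j a)) * (∑ b, star (φ i b) * φ j b) := by
    rw [Finset.sum_mul_sum]
    simp only [Matrix.trace, Matrix.diag, Matrix.mul_apply, Matrix.conjTranspose_apply,
      vecMulVec_apply, Pi.star_apply, star_mul', star_star]
    apply Finset.sum_congr rfl; intro a _
    apply Finset.sum_congr rfl; intro b _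
    ring
  rw [expand]
  have h1 : (∑ a, φ i a * star (φ j a)) = if j = i then 1 else 0 := by
    rw [← hortho j i]; apply Finset.sum_congr rfl; intro a _
    rw [mul_comm]; rfl
  have h2 := hortho i j
  simp only [starRingEnd_apply] at h2
  rw [h1, h2]
  by_cases h : i = j <;> simp [h, eq_comm]

private lemma trace_PY {N : ℕ} (φv : Fin N → ℂ) (Y : Matrix (Fin N) (Fin N) ℂ) :
    ((vecMulVec φv (star φv)) * Y).trace = star φv ⬝ᵥ Y.mulVec φv := by
  simp only [Matrix.trace, Matrix.diag, Matrix.mul_apply, vecMulVec_apply, Pi.star_apply,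
    dotProduct, Matrix.mulVec]
  rw [Finset.sum_comm]
  apply Finset.sum_congr rfl; intro b _
  rw [Finset.mul_sum]
  apply Finset.sum_congr rfl; intro a _
  ring

private lemma quad_form_eq {N : ℕ} (φv : Fin N → ℂ) (Y : Matrix (Fin N) (Fin N) ℂ)
    (hYherm : Y.IsHermitian) (hYproj : Y * Y = Y) :
    star φv ⬝ᵥ Y.mulVec φv = ∑ a, (Complex.normSq (Y.mulVec φv a) : ℂ) := by
  have : star φv ⬝ᵥ Y.mulVec φv = star (Y.mulVec φv) ⬝ᵥ (Y.mulVec φv) := by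
    rw [Matrix.star_mulVec, ← Matrix.dotProduct_mulVec, hYherm.eq, Matrix.mulVec_mulVec, hYproj]
  rw [this]
  simp only [dotProduct, Pi.star_apply]
  exact Finset.sum_congr rfl fun a _ => by rw [Complex.star_def, Complex.normSq_eq_conj_mul_self]

private lemma psi_dot_eq {N : ℕ} (φv ψv : Fin N → ℂ) (Y : Matrix (Fin N) (Fin N) ℂ)
    (hYherm : Y.IsHermitian) (hfix : Y.mulVec ψv = ψv) :
    star ψv ⬝ᵥ Y.mulVec φv = star ψv ⬝ᵥ φv := by
  rw [Matrix.dotProduct_mulVec]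
  congr 1
  have : star ψv ᵥ* Y = star (Yᴴ.mulVec ψv) := by
    rw [Matrix.star_mulVec, conjTranspose_conjTranspose]
  rw [this, hYherm.eq, hfix]

private lemma smul_trace_helper {n : ℕ} (a b : ℝ) (M P : Matrix (Fin n) (Fin n) ℂ) :
    ((((a:ℝ):ℂ) • M) * (((b:ℝ):ℂ) • P)ᴴ).trace = ((a*b :ℝ):ℂ) * (M*Pᴴ).trace := by
  rw [conjTranspose_smul]
  rw [smul_mul_assoc, mul_smul_comm, trace_smul, trace_smul]
  simp [smul_smul, Complex.star_def, Complex.conj_ofReal]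
  ring

/-- If `φ 1, …, φ k` are orthonormal, `ψ 1, …, ψ k` are unit vectors with
`‖φ i − ψ i‖ ≤ η`, `Y` is the orthogonal projector onto the span of the `ψ i`,
`X = (1/√k) ∑ |φ i⟩⟨φ i|` and `Ȳ = Y / √(rank Y)`, then `‖X − Ȳ‖_F ≤ √2 · η`. -/
theorem normalized_projector_close_to_net_point
    (N k : ℕ) (hk : 0 < k) (η : ℝ) (hη : 0 ≤ η)
    (φ ψ : Fin k → (Fin N → ℂ))
    (hortho : ∀ i j, ∑ l, (starRingEnd ℂ) (φ i l) * φ j l = if i = j then 1 else 0)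
    (hunit : ∀ i, ∑ l, Complex.normSq (ψ i l) = 1)
    (hclose : ∀ i, Real.sqrt (∑ l, Complex.normSq (φ i l - ψ i l)) ≤ η)
    (Y : Matrix (Fin N) (Fin N) ℂ) (hYherm : Y.IsHermitian) (hYproj : Y * Y = Y)
    (hYrange : ∀ v : Fin N → ℂ, Y.mulVec v ∈ Submodule.span ℂ (Set.range ψ))
    (hYfix : ∀ v ∈ Submodule.span ℂ (Set.range ψ), Y.mulVec v = v) :
    frobNorm (((Real.sqrt k)⁻¹ : ℂ) • (∑ i, vecMulVec (φ i) (star (φ i)))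
        - ((Real.sqrt Y.rank)⁻¹ : ℂ) • Y) ≤ Real.sqrt 2 * η := by
  classical
  set S : Matrix (Fin N) (Fin N) ℂ := ∑ i, vecMulVec (φ i) (star (φ i)) with hS
  -- basic facts about ψ and rank
  have hψmem : ∀ i, ψ i ∈ Submodule.span ℂ (Set.range ψ) :=
    fun i => Submodule.subset_span ⟨i, rfl⟩
  have hψfix : ∀ i, Y.mulVec (ψ i) = ψ i := fun i => hYfix _ (hψmem i)
  have hrle : Y.rank ≤ k := by
    have hsub : LinearMap.range Y.mulVecLin ≤ Submodule.span ℂ (Set.range ψ) := by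
      rintro x ⟨v, rfl⟩
      simpa [Matrix.mulVecLin_apply] using hYrange v
    calc Y.rank ≤ Module.finrank ℂ (Submodule.span ℂ (Set.range ψ)) :=
          Submodule.finrank_mono hsub
      _ ≤ Fintype.card (Fin k) := finrank_range_le_card ψ
      _ = k := by simp
  have hrpos : 0 < Y.rank := by
    rcases Nat.eq_zero_or_pos Y.rank with h0 | h
    · exfalso
      have hbot : LinearMap.range Y.mulVecLin = ⊥ := Submodule.finrank_eq_zero.mp h0
      have hmem : Y.mulVec (ψ ⟨0, hk⟩) ∈ LinearMap.range Y.mulVecLin := ⟨ψ ⟨0, hk⟩, rfl⟩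
      rw [hbot, Submodule.mem_bot, hψfix] at hmem
      have := hunit ⟨0, hk⟩
      rw [hmem] at this
      simp at this
    · exact h
  -- real scalars
  set cR : ℝ := (Real.sqrt k)⁻¹ with hcR
  set dR : ℝ := (Real.sqrt Y.rank)⁻¹ with hdR
  have hkpos : (0:ℝ) < Real.sqrt k := Real.sqrt_pos.mpr (by exact_mod_cast hk)
  have hrpos' : (0:ℝ) < Real.sqrt Y.rank := Real.sqrt_pos.mpr (by exact_mod_cast hrpos)
  have hcpos : 0 < cR := by positivity
  have hdpos : 0 < dR := by positivity
  have hcd : cR ≤ dR := by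
    apply inv_anti₀ hrpos'
    exact Real.sqrt_le_sqrt (by exact_mod_cast hrle)
  have hc2k : cR * cR * k = 1 := by
    rw [hcR, ← Real.sqrt_mul_self (le_of_lt (by exact_mod_cast hk : (0:ℝ) < k))]
    field_simp
    rw [Real.sq_sqrt (by positivity)]
  -- the Q values
  set Q : Fin k → ℝ := fun i => ∑ a, Complex.normSq (Y.mulVec (φ i) a) with hQ
  have hQnonneg : ∀ i, 0 ≤ Q i := fun i => Finset.sum_nonneg fun a _ => Complex.normSq_nonneg _
  have hq : ∀ i, star (φ i) ⬝ᵥ Y.mulVec (φ i) = ((Q i : ℝ) : ℂ) := by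
    intro i
    rw [quad_form_eq _ _ hYherm hYproj, hQ]
    push_cast
    rfl
  -- Hermitian-ness of S
  have hSherm : Sᴴ = S := by
    rw [hS, conjTranspose_sum]
    apply Finset.sum_congr rfl
    intro i _
    ext a b
    simp [conjTranspose_apply, vecMulVec_apply, mul_comm]
  -- trace computations
  have hSS : (S * Sᴴ).trace = (k : ℂ) := by
    rw [hS, conjTranspose_sum, Finset.sum_mul_sum, Matrix.trace_sum]
    rw [show ∀ f : Fin k → ℂ, (∑ i, f i) = ∑ i, f i from fun _ => rfl]
    calc (∑ i, (∑ j, ((vecMulVec (φ i) (star (φ i))) * (vecMulVec (φ j) (star (φ j)))ᴴ)).trace)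
        = ∑ i, ∑ j, ((vecMulVec (φ i) (star (φ i))) * (vecMulVec (φ j) (star (φ j)))ᴴ).trace := by
          exact Finset.sum_congr rfl fun i _ => by rw [Matrix.trace_sum]
      _ = ∑ i : Fin k, (1:ℂ) := by
          apply Finset.sum_congr rfl
          intro i _
          rw [Finset.sum_congr rfl fun j _ => trace_PP φ hortho i j]
          simp
      _ = (k : ℂ) := by simp
  have hSY : (S * Y).trace = ((∑ i, Q i : ℝ) : ℂ) := by
    rw [hS, Finset.sum_mul, Matrix.trace_sum]
    push_cast
    apply Finset.sum_congr rfl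
    intro i _
    rw [trace_PY, hq i]
  have hYY : (Y * Yᴴ).trace = ((Y.rank : ℕ) : ℂ) := by
    rw [hYherm.eq, hYproj]
    exact trace_eq_rank_of_idem Y hYproj
  -- put the goal in ↑cR, ↑dR form
  rw [show ((Real.sqrt (k:ℝ) : ℝ) : ℂ)⁻¹ = ((cR : ℝ) : ℂ) by rw [hcR]; push_cast; ring,
      show ((Real.sqrt (Y.rank:ℝ) : ℝ) : ℂ)⁻¹ = ((dR : ℝ) : ℂ) by rw [hdR]; push_cast; ring]
  set A : Matrix (Fin N) (Fin N) ℂ := ((cR : ℝ) : ℂ) • S with hA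
  set B : Matrix (Fin N) (Fin N) ℂ := ((dR : ℝ) : ℂ) • Y with hB
  set Qs : ℝ := ∑ i, Q i with hQs
  have hQsnonneg : 0 ≤ Qs := Finset.sum_nonneg fun i _ => hQnonneg i
  -- the four traces
  have tA : (A * Aᴴ).trace = ((cR * cR * k : ℝ) : ℂ) := by
    rw [hA, smul_trace_helper, hSS]; push_cast; ring
  have tB : (B * Bᴴ).trace = ((dR * dR * Y.rank : ℝ) : ℂ) := by
    rw [hB, smul_trace_helper, hYY]; push_cast; ring
  have tAB : (A * Bᴴ).trace = ((cR * dR * Qs : ℝ) : ℂ) := by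
    rw [hA, hB, smul_trace_helper, hYherm.eq, hSY]; push_cast; ring
  have tBA : (B * Aᴴ).trace = ((cR * dR * Qs : ℝ) : ℂ) := by
    rw [hB, hA, smul_trace_helper, hSherm, Matrix.trace_mul_comm, hSY]
    push_cast
    ring
  have texp : ((A - B) * (A - B)ᴴ).trace
      = (A * Aᴴ).trace - (A * Bᴴ).trace - (B * Aᴴ).trace + (B * Bᴴ).trace := by
    rw [conjTranspose_sub, Matrix.sub_mul, Matrix.mul_sub, Matrix.mul_sub,
        Matrix.trace_sub, Matrix.trace_sub, Matrix.trace_sub]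
    ring
  have hd2r : dR * dR * (Y.rank : ℝ) = 1 := by
    rw [hdR, ← Real.sqrt_mul_self (by positivity : (0:ℝ) ≤ (Y.rank:ℝ))]
    field_simp
    rw [Real.sq_sqrt (by positivity)]
  have hTre : (((A - B) * (A - B)ᴴ).trace).re = 2 - 2 * (cR * dR * Qs) := by
    rw [texp, tA, tB, tAB, tBA]
    rw [hc2k, hd2r]
    push_cast
    simp [Complex.sub_re, Complex.add_re, Complex.ofReal_re]
    ring
  -- per-i lower bound on Q i in the small-η case
  have hQbound : η ≤ 1 → ∀ i, 1 - η ^ 2 ≤ Q i := by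
    intro hη1 i
    have hcs := cs_bound (ψ i) (Y.mulVec (φ i)) (hunit i)
    have heq : (∑ l, star (ψ i l) * (Y.mulVec (φ i)) l) = star (ψ i) ⬝ᵥ φ i := by
      rw [show (∑ l, star (ψ i l) * Y.mulVec (φ i) l) = star (ψ i) ⬝ᵥ Y.mulVec (φ i) from rfl,
          psi_dot_eq _ _ _ hYherm (hψfix i)]
    rw [heq] at hcs
    -- Re bound
    have hre : 1 - η ^ 2 / 2 ≤ (star (ψ i) ⬝ᵥ φ i).re := by
      have hs : (0:ℝ) ≤ ∑ l, Complex.normSq (φ i l - ψ i l) :=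
        Finset.sum_nonneg fun l _ => Complex.normSq_nonneg _
      have hsq : ∑ l, Complex.normSq (φ i l - ψ i l) ≤ η ^ 2 := by
        rw [← Real.sq_sqrt hs]
        exact pow_le_pow_left₀ (Real.sqrt_nonneg _) (hclose i) 2
      have hφn : ∑ l, Complex.normSq (φ i l) = 1 := by
        have h1 : (∑ l, (starRingEnd ℂ) (φ i l) * φ i l)
            = ((∑ l, Complex.normSq (φ i l) : ℝ) : ℂ) := by
          push_cast
          exact Finset.sum_congr rfl fun l _ => by rw [mul_comm, Complex.mul_conj]
        have h2 := hortho i i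
        rw [if_pos rfl, h1] at h2
        exact_mod_cast h2
      have hexp : ∑ l, Complex.normSq (φ i l - ψ i l)
          = (∑ l, Complex.normSq (φ i l)) + (∑ l, Complex.normSq (ψ i l))
            - 2 * ∑ l, (φ i l * (starRingEnd ℂ) (ψ i l)).re := by
        rw [Finset.mul_sum, ← Finset.sum_add_distrib, ← Finset.sum_sub_distrib]
        exact Finset.sum_congr rfl fun l _ => Complex.normSq_sub _ _
      rw [hexp, hφn, hunit i] at hsq
      have hre' : (star (ψ i) ⬝ᵥ φ i).re = ∑ l, (φ i l * (starRingEnd ℂ) (ψ i l)).re := by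
        rw [dotProduct, Complex.re_sum]
        exact Finset.sum_congr rfl fun l _ => by rw [mul_comm]; rfl
      rw [hre']
      linarith
    have hη2 : η ^ 2 ≤ 1 := pow_le_one₀ hη hη1
    have hrenn : 0 ≤ (star (ψ i) ⬝ᵥ φ i).re := by linarith
    have habs : (star (ψ i) ⬝ᵥ φ i).re ≤ ‖star (ψ i) ⬝ᵥ φ i‖ :=
      Complex.re_le_norm _
    have h1 : (1 - η ^ 2 / 2) ^ 2 ≤ Q i := by
      calc (1 - η ^ 2 / 2) ^ 2 ≤ ((star (ψ i) ⬝ᵥ φ i).re) ^ 2 :=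
            pow_le_pow_left₀ (by linarith) hre 2
        _ ≤ (‖star (ψ i) ⬝ᵥ φ i‖) ^ 2 := pow_le_pow_left₀ hrenn habs 2
        _ ≤ Q i := hcs
    have haux : (1 - η ^ 2 / 2) ^ 2 = 1 - η ^ 2 + (η ^ 2) ^ 2 / 4 := by ring
    rw [haux] at h1
    linarith [sq_nonneg (η ^ 2)]
  -- final assembly
  show Real.sqrt (((A - B) * (A - B)ᴴ).trace).re ≤ Real.sqrt 2 * η
  rcases le_or_gt η 1 with hη1 | hη1
  · -- small η
    have hQs1 : (k : ℝ) * (1 - η ^ 2) ≤ Qs := by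
      rw [hQs]
      calc (k : ℝ) * (1 - η ^ 2) = ∑ _i : Fin k, (1 - η ^ 2) := by simp [mul_comm]; ring
        _ ≤ ∑ i, Q i := Finset.sum_le_sum fun i _ => hQbound hη1 i
    have hη2 : η ^ 2 ≤ 1 := pow_le_one₀ hη hη1
    have h1mη : (0:ℝ) ≤ 1 - η ^ 2 := by linarith
    have hcdQ : 1 - η ^ 2 ≤ cR * dR * Qs := by
      have h1 : cR * cR * ((k:ℝ) * (1 - η ^ 2)) ≤ (cR * dR) * Qs :=
        mul_le_mul (mul_le_mul_of_nonneg_left hcd hcpos.le) hQs1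
          (mul_nonneg (Nat.cast_nonneg k) h1mη) (mul_nonneg hcpos.le hdpos.le)
      have h2 : cR * cR * ((k:ℝ) * (1 - η ^ 2)) = 1 - η ^ 2 := by
        rw [show cR * cR * ((k:ℝ) * (1 - η ^ 2)) = (cR * cR * (k:ℝ)) * (1 - η ^ 2) by ring,
            hc2k, one_mul]
      linarith
    have : (((A - B) * (A - B)ᴴ).trace).re ≤ 2 * η ^ 2 := by rw [hTre]; linarith
    calc Real.sqrt (((A - B) * (A - B)ᴴ).trace).re ≤ Real.sqrt (2 * η ^ 2) :=
          Real.sqrt_le_sqrt this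
      _ = Real.sqrt 2 * η := by
          rw [Real.sqrt_mul (by norm_num), Real.sqrt_sq hη]
  · -- large η
    have : (((A - B) * (A - B)ᴴ).trace).re ≤ 2 := by
      rw [hTre]
      have : 0 ≤ cR * dR * Qs := mul_nonneg (mul_nonneg hcpos.le hdpos.le) hQsnonneg
      linarith
    calc Real.sqrt (((A - B) * (A - B)ᴴ).trace).re ≤ Real.sqrt 2 := Real.sqrt_le_sqrt this
      _ = Real.sqrt 2 * 1 := by ring
      _ ≤ Real.sqrt 2 * η := by
          apply mul_le_mul_of_nonneg_left (le_of_lt hη1) (Real.sqrt_nonneg 2)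
end

section
/- Let g ∈ ℝ^{N³} be a vector, and let T be the associated 3-tensor (the matrix |g⟩⟨g| with entries zeroed whenever i=i', j=j', or k=k'). Then ‖T‖_{2,2,2} ≤ 64·(ln N)^{3/2}·max_{X,Y,Z} |⟨g| X⊗Y⊗Z |g⟩ − Tr(X⊗Y⊗Z)|, where the maximum runs over all triples of normalized projectors X, Y, Z on ℂ^N. -/
open Matrix

/-- `X` is a normalized projector: an orthogonal projector of rank `k ≥ 1`
divided by `√k`. -/
def IsNormalizedProjector {N : ℕ} (X : Matrix (Fin N) (Fin N) ℂ) : Prop :=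
  ∃ P : Matrix (Fin N) (Fin N) ℂ, P.IsHermitian ∧ P * P = P ∧ 1 ≤ P.rank ∧
    X = ((Real.sqrt P.rank)⁻¹ : ℂ) • P

/-- The triple Kronecker (tensor) product of three `N × N` matrices. -/
def kron3 {N : ℕ} (X Y Z : Matrix (Fin N) (Fin N) ℂ) :
    Matrix (Fin N × Fin N × Fin N) (Fin N × Fin N × Fin N) ℂ :=
  fun p q => X p.1 q.1 * Y p.2.1 q.2.1 * Z p.2.2 q.2.2

/-- The matrix `T` built from `g`: `|g⟩⟨g|` with all entries having `i = i'`, `j = j'` or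
`k = k'` zeroed out. -/
def gameTensor {N : ℕ} (g : Fin N × Fin N × Fin N → ℝ) :
    Matrix (Fin N × Fin N × Fin N) (Fin N × Fin N × Fin N) ℝ :=
  fun p q =>
    if p.1 ≠ q.1 ∧ p.2.1 ≠ q.2.1 ∧ p.2.2 ≠ q.2.2 then g p * g q else 0


open Finset

lemma harmonic_le (N : ℕ) (hN : 1 ≤ N) :
    ∑ k ∈ range N, (1:ℝ)/(k+1) ≤ 1 + Real.log N := by
  induction N, hN using Nat.le_induction with
  | base => simp
  | succ n hn ih =>
    rw [Finset.sum_range_succ]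
    have hn0 : (0:ℝ) < n := by exact_mod_cast hn
    have h1 : (1:ℝ)/(n+1) ≤ Real.log (n+1) - Real.log n := by
      have hpos : (0:ℝ) < (n:ℝ)/(n+1) := by positivity
      have h := Real.log_le_sub_one_of_pos hpos
      rw [Real.log_div (ne_of_gt hn0) (by positivity)] at h
      have hx : (n:ℝ)/(n+1) - 1 = -(1/(n+1)) := by field_simp; ring
      linarith [hx ▸ h]
    push_cast
    linarith

/-- Abel summation by induction. -/
lemma abel_sum {M : Type*} [AddCommGroup M] [Module ℂ M] (E : ℕ → M) (f : ℕ → ℂ) (n : ℕ) :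
    ∑ k ∈ range n, (f k - f (k+1)) • (∑ l ∈ range (k+1), E l)
      = ∑ l ∈ range n, (f l - f n) • E l := by
  induction n with
  | zero => simp
  | succ n ih =>
    rw [Finset.sum_range_succ, ih, Finset.sum_range_succ (f := fun l => (f l - f (n+1)) • E l)]
    rw [Finset.sum_range_succ (f := E), smul_add, ← add_assoc]
    congr 1
    rw [Finset.smul_sum, ← Finset.sum_add_distrib]
    apply Finset.sum_congr rfl; intro l _
    rw [← add_smul]; ring_nf

lemma sqrt_succ_sub_le (k : ℕ) :
    Real.sqrt (k+1) - Real.sqrt k ≤ 1 / Real.sqrt (k+1) := by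
  have ha : (0:ℝ) < Real.sqrt (k+1) := Real.sqrt_pos.2 (by positivity)
  have hb : (0:ℝ) ≤ Real.sqrt k := Real.sqrt_nonneg _
  have hab : Real.sqrt k ≤ Real.sqrt (k+1) := Real.sqrt_le_sqrt (by push_cast; linarith)
  have h1 : Real.sqrt ((k:ℝ)+1) ^ 2 = (k:ℝ)+1 := Real.sq_sqrt (by positivity)
  have h2 : Real.sqrt (k:ℝ) ^ 2 = (k:ℝ) := Real.sq_sqrt (by positivity)
  rw [le_div_iff₀ ha]
  nlinarith [mul_nonneg hb (sub_nonneg.2 hab)]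

/-- Cauchy–Schwarz in sqrt form for nonneg sums. -/
lemma sum_le_sqrt_mul_sqrt {ι : Type*} (s : Finset ι) (f g : ι → ℝ)
    (hf : ∀ i ∈ s, 0 ≤ f i) (hg : ∀ i ∈ s, 0 ≤ g i) :
    ∑ i ∈ s, f i * g i ≤ Real.sqrt (∑ i ∈ s, f i ^ 2) * Real.sqrt (∑ i ∈ s, g i ^ 2) := by
  have h := Finset.sum_mul_sq_le_sq_mul_sq s f g
  have h0 : 0 ≤ ∑ i ∈ s, f i * g i := Finset.sum_nonneg fun i hi => mul_nonneg (hf i hi) (hg i hi)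
  calc ∑ i ∈ s, f i * g i = Real.sqrt ((∑ i ∈ s, f i * g i)^2) := (Real.sqrt_sq h0).symm
    _ ≤ Real.sqrt ((∑ i ∈ s, f i ^ 2) * ∑ i ∈ s, g i ^ 2) := Real.sqrt_le_sqrt h
    _ = _ := Real.sqrt_mul (Finset.sum_nonneg fun i _ => sq_nonneg _) _


variable {N : ℕ}

/-- sandwich linear map `w ↦ U * diagonal w * V`. -/
noncomputable def sandwich (U V : Matrix (Fin N) (Fin N) ℂ) :
    (Fin N → ℂ) →ₗ[ℂ] Matrix (Fin N) (Fin N) ℂ where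
  toFun w := U * diagonal w * V
  map_add' w₁ w₂ := by
    show U * diagonal (w₁ + w₂) * V = U * diagonal w₁ * V + U * diagonal w₂ * V
    have h : diagonal (w₁ + w₂) = diagonal w₁ + diagonal w₂ := by
      ext i j; by_cases h : i = j <;> simp [diagonal_apply, h]
    rw [h, mul_add, add_mul]
  map_smul' c w := by
    show U * diagonal (c • w) * V = c • (U * diagonal w * V)
    have h : diagonal (c • w) = c • diagonal w := by
      ext i j; by_cases h : i = j <;> simp [diagonal_apply, h]
    rw [h, mul_smul_comm, smul_mul_assoc]

lemma sandwich_apply (U V : Matrix (Fin N) (Fin N) ℂ) (w : Fin N → ℂ) :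
    sandwich U V w = U * diagonal w * V := rfl

lemma isUnit_det_of_unitary {U : Matrix (Fin N) (Fin N) ℂ}
    (hU : U ∈ Matrix.unitaryGroup (Fin N) ℂ) : IsUnit U.det := by
  apply Matrix.isUnit_iff_isUnit_det U |>.mp
  exact ⟨⟨U, star U, (Unitary.mem_iff.mp hU).2, (Unitary.mem_iff.mp hU).1⟩, rfl⟩

lemma isUnit_det_star_of_unitary {U : Matrix (Fin N) (Fin N) ℂ}
    (hU : U ∈ Matrix.unitaryGroup (Fin N) ℂ) : IsUnit (star U).det := by
  apply Matrix.isUnit_iff_isUnit_det (star U) |>.mp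
  exact ⟨⟨star U, U, (Unitary.mem_iff.mp hU).1, (Unitary.mem_iff.mp hU).2⟩, rfl⟩

lemma sandwich_hermitian {U : Matrix (Fin N) (Fin N) ℂ} (w : Fin N → ℂ)
    (hw : ∀ i, star (w i) = w i) : (sandwich U (star U) w).IsHermitian := by
  have hws : star w = w := by funext i; exact hw i
  show (U * diagonal w * star U)ᴴ = U * diagonal w * star U
  simp only [Matrix.star_eq_conjTranspose]
  rw [conjTranspose_mul, conjTranspose_mul, conjTranspose_conjTranspose,
    diagonal_conjTranspose, hws, mul_assoc]

lemma sandwich_idem {U : Matrix (Fin N) (Fin N) ℂ}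
    (hU : U ∈ Matrix.unitaryGroup (Fin N) ℂ) (w : Fin N → ℂ)
    (hw : ∀ i, w i = 0 ∨ w i = 1) :
    (sandwich U (star U) w) * (sandwich U (star U) w) = sandwich U (star U) w := by
  rw [sandwich_apply]
  have h1 : star U * U = 1 := (Unitary.mem_iff.mp hU).1
  have hww : (fun i => w i * w i) = w := by
    funext i; rcases hw i with h | h <;> simp [h]
  have h2 : diagonal w * diagonal w = diagonal w := by
    rw [diagonal_mul_diagonal, hww]
  have h3 : U * diagonal w * star U * (U * diagonal w * star U)
      = U * (diagonal w * ((star U * U) * (diagonal w * star U))) := by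
    noncomm_ring
  rw [h3, h1, one_mul,
    show U * (diagonal w * (diagonal w * star U)) = U * (diagonal w * diagonal w) * star U
      from by noncomm_ring, h2, mul_assoc]

lemma sandwich_rank {U : Matrix (Fin N) (Fin N) ℂ}
    (hU : U ∈ Matrix.unitaryGroup (Fin N) ℂ) (w : Fin N → ℂ) :
    (sandwich U (star U) w).rank = Fintype.card {i // w i ≠ 0} := by
  classical
  rw [sandwich_apply, Matrix.rank_mul_eq_left_of_isUnit_det (star U) _
      (isUnit_det_star_of_unitary hU),
    Matrix.rank_mul_eq_right_of_isUnit_det U _ (isUnit_det_of_unitary hU),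
    Matrix.rank_diagonal]

lemma decomp_nonneg {N : ℕ} (hN : 0 < N) (U : Matrix (Fin N) (Fin N) ℂ)
    (hU : U ∈ Matrix.unitaryGroup (Fin N) ℂ) (μ : Fin N → ℝ) (hμ : ∀ j, 0 ≤ μ j) :
    ∃ (c : ℕ → ℝ) (P : ℕ → Matrix (Fin N) (Fin N) ℂ),
      (∀ k ∈ Finset.range N, IsNormalizedProjector (P k)) ∧ (∀ k, 0 ≤ c k) ∧
      sandwich U (star U) (fun i => (μ i : ℂ)) = ∑ k ∈ Finset.range N, ((c k : ℝ) : ℂ) • P k ∧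
      ∑ k ∈ Finset.range N, c k
        ≤ Real.sqrt (∑ j, μ j ^ 2) * Real.sqrt (∑ k ∈ Finset.range N, 1/((k:ℝ)+1)) := by
  classical
  set σ : Equiv.Perm (Fin N) := Tuple.sort (fun k => -μ k) with hσ
  have hsort : ∀ a b : Fin N, a ≤ b → μ (σ b) ≤ μ (σ a) := by
    intro a b hab
    have := Tuple.monotone_sort (fun k => -μ k) hab
    simp only [Function.comp_apply] at this
    simp only [hσ]
    linarith
  set ν : ℕ → ℝ := fun n => if h : n < N then μ (σ ⟨n, h⟩) else 0 with hνdef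
  have hν0 : ∀ n, 0 ≤ ν n := by
    intro n; rw [hνdef]; dsimp only; split
    · exact hμ _
    · exact le_rfl
  have hνN : ∀ n, N ≤ n → ν n = 0 := by
    intro n hn; rw [hνdef]; exact dif_neg (by omega)
  have hνmono : ∀ n, ν (n+1) ≤ ν n := by
    intro n
    by_cases h1 : n + 1 < N
    · have h0 : n < N := by omega
      rw [hνdef]; dsimp only; rw [dif_pos h1, dif_pos h0]
      exact hsort ⟨n, h0⟩ ⟨n+1, h1⟩ (by simp [Fin.le_def])
    · rw [hνN (n+1) (by omega)]; exact hν0 n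
  -- the indicator vectors
  set v : ℕ → (Fin N → ℂ) :=
    fun l => if h : l < N then (fun i => if i = σ ⟨l, h⟩ then 1 else 0) else 0 with hvdef
  set wfun : ℕ → (Fin N → ℂ) := fun k i => if ((σ.symm i : ℕ)) ≤ k then 1 else 0 with hwdef
  have hw : ∀ k, k < N → ∑ l ∈ Finset.range (k+1), v l = wfun k := by
    intro k hk
    funext i
    rw [Finset.sum_apply]
    have hterm : ∀ l ∈ Finset.range (k+1),
        v l i = if ((σ.symm i : ℕ)) = l then 1 else 0 := by
      intro l hl
      have hlN : l < N := by
        have := Finset.mem_range.mp hl; omega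
      rw [hvdef]; dsimp only; rw [dif_pos hlN]
      congr 1
      simp only [eq_iff_iff]
      constructor
      · intro h; rw [h]; simp [Equiv.symm_apply_apply]
      · intro h
        have : σ.symm i = ⟨l, hlN⟩ := Fin.ext h
        rw [← this, Equiv.apply_symm_apply]
    rw [Finset.sum_congr rfl hterm, Finset.sum_ite_eq (Finset.range (k+1)) _ (fun _ => (1:ℂ))]
    rw [hwdef]; dsimp only
    simp [Finset.mem_range, Nat.lt_succ_iff]
  set Q : ℕ → Matrix (Fin N) (Fin N) ℂ := fun k => sandwich U (star U) (wfun k) with hQdef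
  have hwval : ∀ k i, wfun k i = 0 ∨ wfun k i = 1 := by
    intro k i; rw [hwdef]; dsimp only; split
    · right; rfl
    · left; rfl
  have hcard : ∀ k, k < N → Fintype.card {i // wfun k i ≠ 0} = k + 1 := by
    intro k hk
    have hiff : ∀ i : Fin N, wfun k i ≠ 0 ↔ ((σ.symm i : ℕ)) ≤ k := by
      intro i; rw [hwdef]; dsimp only; split
      · simp_all
      · simp_all
    have e1 : {i // wfun k i ≠ 0} ≃ {l : Fin N // (l : ℕ) ≤ k} :=
      Equiv.subtypeEquiv σ.symm (fun i => by rw [hiff i])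
    have e2 : {l : Fin N // (l : ℕ) ≤ k} ≃ Fin (k+1) :=
      { toFun := fun x => ⟨x.1, Nat.lt_succ_of_le x.2⟩
        invFun := fun m => ⟨⟨m.1, lt_of_lt_of_le m.2 hk⟩, Nat.le_of_lt_succ m.2⟩
        left_inv := fun x => by ext; rfl
        right_inv := fun m => by ext; rfl }
    rw [Fintype.card_congr (e1.trans e2), Fintype.card_fin]
  have hrank : ∀ k, k < N → (Q k).rank = k + 1 := by
    intro k hk
    rw [hQdef]; dsimp only
    rw [sandwich_rank hU, hcard k hk]
  -- definitions of c and P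
  refine ⟨fun k => (ν k - ν (k+1)) * Real.sqrt (k+1),
    fun k => ((Real.sqrt ((k:ℝ)+1))⁻¹ : ℂ) • Q k, ?_, ?_, ?_, ?_⟩
  · -- normalized projectors
    intro k hk
    have hk' : k < N := Finset.mem_range.mp hk
    refine ⟨Q k, ?_, ?_, ?_, ?_⟩
    · exact sandwich_hermitian _ (fun i => by rcases hwval k i with h | h <;> simp [h])
    · exact sandwich_idem hU _ (hwval k)
    · rw [hrank k hk']; omega
    · rw [hrank k hk']; push_cast; rfl
  · -- nonneg coefficients
    intro k
    exact mul_nonneg (sub_nonneg.2 (hνmono k)) (Real.sqrt_nonneg _)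
  · -- the decomposition identity
    have key : ∀ k ∈ Finset.range N,
        (((ν k - ν (k+1)) * Real.sqrt (k+1) : ℝ) : ℂ) • (((Real.sqrt ((k:ℝ)+1))⁻¹ : ℂ) • Q k)
          = (((ν k : ℂ)) - ((ν (k+1) : ℂ))) • (∑ l ∈ Finset.range (k+1), sandwich U (star U) (v l)) := by
      intro k hk
      have hk' : k < N := Finset.mem_range.mp hk
      have hsq : (Real.sqrt ((k:ℝ)+1)) ≠ 0 := by positivity
      have hQ : Q k = ∑ l ∈ Finset.range (k+1), sandwich U (star U) (v l) := by
        rw [hQdef]; dsimp only; rw [← hw k hk', map_sum]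
      rw [smul_smul, ← hQ]
      congr 1
      have hne : ((Real.sqrt ((k:ℝ)+1) : ℝ) : ℂ) ≠ 0 := by
        exact_mod_cast Complex.ofReal_ne_zero.mpr hsq
      field_simp
      push_cast; ring
    rw [Finset.sum_congr rfl key]
    have habel := abel_sum (fun l => sandwich U (star U) (v l)) (fun n => ((ν n : ℝ) : ℂ)) N
    rw [habel]
    have hνNc : ((ν N : ℝ) : ℂ) = 0 := by rw [hνN N le_rfl]; simp
    simp only [hνNc, sub_zero]
    -- now  ∑ l ∈ range N, (ν l : ℂ) • sandwich (v l) = sandwich (μ : ℂ)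
    rw [← Fin.sum_univ_eq_sum_range (fun l => ((ν l : ℝ) : ℂ) • sandwich U (star U) (v l)) N]
    have hterm : ∀ i : Fin N,
        ((ν (i : ℕ) : ℝ) : ℂ) • sandwich U (star U) (v (i : ℕ))
          = ((μ (σ i) : ℂ)) • sandwich U (star U) (fun j => if j = σ i then 1 else 0) := by
      intro i
      rw [hνdef, hvdef]; dsimp only
      rw [dif_pos i.isLt, dif_pos i.isLt]
    rw [Finset.sum_congr rfl (fun i _ => hterm i)]
    rw [Equiv.sum_comp σ (fun j => ((μ j : ℂ)) • sandwich U (star U) (fun i => if i = j then 1 else 0))]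
    rw [Finset.sum_congr rfl (fun (j : Fin N) _ =>
      ((sandwich U (star U)).map_smul ((μ j : ℂ)) _).symm), ← map_sum]
    congr 1
    funext i
    rw [Finset.sum_apply]
    simp only [Pi.smul_apply, smul_eq_mul, mul_ite, mul_one, mul_zero]
    rw [Finset.sum_ite_eq Finset.univ i (fun j => ((μ j : ℂ)))]
    simp
  · -- the sum bound
    have step1 : ∑ k ∈ Finset.range N, (ν k - ν (k+1)) * Real.sqrt (k+1)
        = ∑ k ∈ Finset.range N, ν k * (Real.sqrt (k+1) - Real.sqrt k) := by
      have h2 : ∑ k ∈ Finset.range N, ν (k+1) * Real.sqrt (k+1)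
          = ∑ k ∈ Finset.range N, ν k * Real.sqrt k := by
        have := Finset.sum_range_succ' (fun k => ν k * Real.sqrt k) N
        rw [Finset.sum_range_succ] at this
        have hN0 : ν N * Real.sqrt N = 0 := by rw [hνN N le_rfl]; ring
        have h00 : ν 0 * Real.sqrt 0 = 0 := by simp
        push_cast at this ⊢
        linarith [this]
      calc ∑ k ∈ Finset.range N, (ν k - ν (k+1)) * Real.sqrt (k+1)
          = (∑ k ∈ Finset.range N, ν k * Real.sqrt (k+1))
            - ∑ k ∈ Finset.range N, ν (k+1) * Real.sqrt (k+1) := by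
            rw [← Finset.sum_sub_distrib]; apply Finset.sum_congr rfl; intros; ring
        _ = (∑ k ∈ Finset.range N, ν k * Real.sqrt (k+1))
            - ∑ k ∈ Finset.range N, ν k * Real.sqrt k := by rw [h2]
        _ = _ := by rw [← Finset.sum_sub_distrib]; apply Finset.sum_congr rfl; intros; ring
    have step2 : ∑ k ∈ Finset.range N, ν k * (Real.sqrt (k+1) - Real.sqrt k)
        ≤ ∑ k ∈ Finset.range N, ν k * (1 / Real.sqrt (k+1)) := by
      apply Finset.sum_le_sum
      intro k _
      exact mul_le_mul_of_nonneg_left (by exact_mod_cast sqrt_succ_sub_le k) (hν0 k)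
    have step3 : ∑ k ∈ Finset.range N, ν k * (1 / Real.sqrt (k+1))
        ≤ Real.sqrt (∑ k ∈ Finset.range N, ν k ^ 2)
          * Real.sqrt (∑ k ∈ Finset.range N, (1 / Real.sqrt (k+1)) ^ 2) := by
      apply sum_le_sqrt_mul_sqrt
      · intro k _; exact hν0 k
      · intro k _; positivity
    have hsq : ∀ k : ℕ, (1 / Real.sqrt ((k:ℝ)+1)) ^ 2 = 1 / ((k:ℝ)+1) := by
      intro k
      rw [div_pow, one_pow, Real.sq_sqrt (by positivity)]
    have hν2 : ∑ k ∈ Finset.range N, ν k ^ 2 = ∑ j, μ j ^ 2 := by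
      rw [← Fin.sum_univ_eq_sum_range (fun k => ν k ^ 2) N]
      have hterm2 : ∀ i : Fin N, ν (i : ℕ) ^ 2 = μ (σ i) ^ 2 := by
        intro i; rw [hνdef]; dsimp only; rw [dif_pos i.isLt]
      rw [Finset.sum_congr rfl (fun i _ => hterm2 i)]
      exact Equiv.sum_comp σ (fun j => μ j ^ 2)
    calc ∑ k ∈ Finset.range N, (ν k - ν (k+1)) * Real.sqrt (k+1)
        ≤ Real.sqrt (∑ k ∈ Finset.range N, ν k ^ 2)
          * Real.sqrt (∑ k ∈ Finset.range N, (1 / Real.sqrt (k+1)) ^ 2) := by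
          rw [step1]; exact le_trans step2 step3
      _ = _ := by
          rw [hν2]
          congr 2
          apply Finset.sum_congr rfl
          intro k _
          exact_mod_cast hsq k

lemma sandwich_spectral {N : ℕ} {B : Matrix (Fin N) (Fin N) ℂ} (hB : B.IsHermitian) :
    B = sandwich (hB.eigenvectorUnitary : Matrix (Fin N) (Fin N) ℂ)
        (star (hB.eigenvectorUnitary : Matrix (Fin N) (Fin N) ℂ))
        (RCLike.ofReal ∘ hB.eigenvalues) := by
  show B = _ * Matrix.diagonal _ * _
  exact hB.spectral_theorem

lemma frob_sq_entries {m : Type*} [Fintype m] (A : Matrix m m ℂ) :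
    ((A * Aᴴ).trace).re = ∑ i, ∑ j, Complex.normSq (A i j) := by
  have h : (A * Aᴴ).trace = ((∑ i, ∑ j, Complex.normSq (A i j) : ℝ) : ℂ) := by
    rw [Matrix.trace]
    push_cast
    apply Finset.sum_congr rfl
    intro i _
    rw [Matrix.diag_apply, Matrix.mul_apply]
    apply Finset.sum_congr rfl
    intro j _
    rw [Matrix.conjTranspose_apply, ← Complex.mul_conj]
    rfl
  rw [h, Complex.ofReal_re]

lemma frob_sq_eigen {N : ℕ} {A : Matrix (Fin N) (Fin N) ℂ} (hA : A.IsHermitian) :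
    ((A * Aᴴ).trace).re = ∑ i, hA.eigenvalues i ^ 2 := by
  have hAH : Aᴴ = A := hA
  set U : Matrix (Fin N) (Fin N) ℂ := (hA.eigenvectorUnitary : Matrix (Fin N) (Fin N) ℂ) with hUdef
  set D : Matrix (Fin N) (Fin N) ℂ := Matrix.diagonal (RCLike.ofReal ∘ hA.eigenvalues) with hDdef
  have hU : U ∈ Matrix.unitaryGroup (Fin N) ℂ := hA.eigenvectorUnitary.2
  have hspec : A = U * D * star U := hA.spectral_theorem
  have h1 : star U * U = 1 := (Unitary.mem_iff.mp hU).1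
  have hAA : A * Aᴴ = U * (D * D) * star U := by
    rw [hAH]
    conv_lhs => rw [hspec]
    have : U * D * star U * (U * D * star U)
        = U * (D * ((star U * U) * (D * star U))) := by noncomm_ring
    rw [this, h1, one_mul,
      show U * (D * (D * star U)) = U * (D * D) * star U from by noncomm_ring]
  have htr : (A * Aᴴ).trace = (D * D).trace := by
    rw [hAA, Matrix.trace_mul_cycle, ← mul_assoc, h1, one_mul]
  have hDD : (D * D).trace = ((∑ i, hA.eigenvalues i ^ 2 : ℝ) : ℂ) := by
    rw [hDdef, Matrix.diagonal_mul_diagonal, Matrix.trace_diagonal]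
    push_cast
    apply Finset.sum_congr rfl
    intro i _
    simp [Function.comp]
    ring
  rw [htr, hDD, Complex.ofReal_re]

lemma add_sq_max (x : ℝ) : max x 0 ^ 2 + max (-x) 0 ^ 2 = x ^ 2 := by
  rcases le_total x 0 with h | h
  · rw [max_eq_right h, max_eq_left (by linarith)]; ring
  · rw [max_eq_left h, max_eq_right (by linarith)]; ring

lemma decompHerm {N : ℕ} (hN : 0 < N) {B : Matrix (Fin N) (Fin N) ℂ} (hB : B.IsHermitian)
    (hfrob : frobNorm B ≤ 1) :
    ∃ (c₁ c₂ : ℕ → ℝ) (P₁ P₂ : ℕ → Matrix (Fin N) (Fin N) ℂ),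
      (∀ k ∈ Finset.range N, IsNormalizedProjector (P₁ k) ∧ IsNormalizedProjector (P₂ k)) ∧
      (∀ k, 0 ≤ c₁ k ∧ 0 ≤ c₂ k) ∧
      B = (∑ k ∈ Finset.range N, ((c₁ k : ℝ) : ℂ) • P₁ k)
          - ∑ k ∈ Finset.range N, ((c₂ k : ℝ) : ℂ) • P₂ k ∧
      (∑ k ∈ Finset.range N, c₁ k) + (∑ k ∈ Finset.range N, c₂ k)
        ≤ Real.sqrt 2 * Real.sqrt (1 + Real.log N) := by
  classical
  set U : Matrix (Fin N) (Fin N) ℂ := (hB.eigenvectorUnitary : Matrix (Fin N) (Fin N) ℂ) with hUdef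
  have hU : U ∈ Matrix.unitaryGroup (Fin N) ℂ := hB.eigenvectorUnitary.2
  set lam : Fin N → ℝ := hB.eigenvalues with hlam
  set μp : Fin N → ℝ := fun j => max (lam j) 0 with hμp
  set μm : Fin N → ℝ := fun j => max (-(lam j)) 0 with hμm
  obtain ⟨c₁, P₁, hP₁, hc₁0, hdec₁, hsum₁⟩ :=
    decomp_nonneg hN U hU μp (fun j => le_max_right _ _)
  obtain ⟨c₂, P₂, hP₂, hc₂0, hdec₂, hsum₂⟩ :=
    decomp_nonneg hN U hU μm (fun j => le_max_right _ _)
  refine ⟨c₁, c₂, P₁, P₂, fun k hk => ⟨hP₁ k hk, hP₂ k hk⟩, fun k => ⟨hc₁0 k, hc₂0 k⟩, ?_, ?_⟩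
  · -- identity
    rw [← hdec₁, ← hdec₂, ← map_sub]
    have hfun : (fun i => (μp i : ℂ)) - (fun i => (μm i : ℂ))
        = (RCLike.ofReal ∘ lam : Fin N → ℂ) := by
      funext i
      have h : μp i - μm i = lam i := by
        simp only [hμp, hμm]
        rcases le_total (lam i) 0 with h | h
        · rw [max_eq_right h, max_eq_left (by linarith)]; ring
        · rw [max_eq_left h, max_eq_right (by linarith)]; ring
      show (μp i : ℂ) - (μm i : ℂ) = _
      rw [← Complex.ofReal_sub, h]
      rfl
    rw [hfun, hUdef, hlam]
    exact sandwich_spectral hB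
  · -- the bound
    have hlam2 : ∑ j, lam j ^ 2 ≤ 1 := by
      have h1 : ((B * Bᴴ).trace).re = ∑ j, lam j ^ 2 := frob_sq_eigen hB
      have h2 : (0:ℝ) ≤ ∑ j, lam j ^ 2 := Finset.sum_nonneg fun j _ => sq_nonneg _
      have h3 : Real.sqrt (∑ j, lam j ^ 2) ≤ 1 := by
        rw [← h1]; exact hfrob
      nlinarith [Real.sq_sqrt h2, Real.sqrt_nonneg (∑ j, lam j ^ 2)]
    set a : ℝ := Real.sqrt (∑ j, μp j ^ 2) with ha
    set b : ℝ := Real.sqrt (∑ j, μm j ^ 2) with hb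
    have hab : a ^ 2 + b ^ 2 ≤ 1 := by
      rw [ha, hb, Real.sq_sqrt (Finset.sum_nonneg fun j _ => sq_nonneg _),
        Real.sq_sqrt (Finset.sum_nonneg fun j _ => sq_nonneg _), ← Finset.sum_add_distrib]
      calc ∑ j, (μp j ^ 2 + μm j ^ 2) = ∑ j, lam j ^ 2 :=
            Finset.sum_congr rfl fun j _ => add_sq_max (lam j)
        _ ≤ 1 := hlam2
    have haple : a + b ≤ Real.sqrt 2 := by
      have h0a : 0 ≤ a := Real.sqrt_nonneg _
      have h0b : 0 ≤ b := Real.sqrt_nonneg _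
      nlinarith [Real.sq_sqrt (show (0:ℝ) ≤ 2 by norm_num), Real.sqrt_nonneg 2,
        sq_nonneg (a - b), sq_nonneg (a + b - Real.sqrt 2)]
    set H : ℝ := ∑ k ∈ Finset.range N, 1/((k:ℝ)+1) with hH
    have hHnn : 0 ≤ H := Finset.sum_nonneg fun k _ => by positivity
    have hHle : Real.sqrt H ≤ Real.sqrt (1 + Real.log N) :=
      Real.sqrt_le_sqrt (harmonic_le N hN)
    calc (∑ k ∈ Finset.range N, c₁ k) + (∑ k ∈ Finset.range N, c₂ k)
        ≤ a * Real.sqrt H + b * Real.sqrt H := add_le_add hsum₁ hsum₂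
      _ = (a + b) * Real.sqrt H := by ring
      _ ≤ Real.sqrt 2 * Real.sqrt (1 + Real.log N) := by
          apply mul_le_mul haple hHle (Real.sqrt_nonneg _) (Real.sqrt_nonneg _)

def zeroDiag {N : ℕ} (X : Matrix (Fin N) (Fin N) ℂ) : Matrix (Fin N) (Fin N) ℂ :=
  fun i j => if i = j then 0 else X i j

lemma zeroDiag_herm {N : ℕ} {X : Matrix (Fin N) (Fin N) ℂ} (hX : X.IsHermitian) :
    (zeroDiag X).IsHermitian := by
  show (zeroDiag X)ᴴ = zeroDiag X
  ext i j
  simp only [Matrix.conjTranspose_apply, zeroDiag]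
  by_cases hij : i = j
  · subst hij; simp
  · have hji : ¬ (j = i) := fun h => hij h.symm
    rw [if_neg hji, if_neg hij]
    exact hX.apply i j

lemma zeroDiag_trace {N : ℕ} (X : Matrix (Fin N) (Fin N) ℂ) : (zeroDiag X).trace = 0 := by
  rw [Matrix.trace]
  apply Finset.sum_eq_zero
  intro i _
  simp [Matrix.diag_apply, zeroDiag]

lemma zeroDiag_frob_le {N : ℕ} (X : Matrix (Fin N) (Fin N) ℂ) :
    frobNorm (zeroDiag X) ≤ frobNorm X := by
  unfold frobNorm
  apply Real.sqrt_le_sqrt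
  rw [frob_sq_entries, frob_sq_entries]
  apply Finset.sum_le_sum; intro i _
  apply Finset.sum_le_sum; intro j _
  by_cases hij : i = j
  · simp [zeroDiag, hij, Complex.normSq_nonneg]
  · simp [zeroDiag, hij]

lemma gameTensor_entry {N : ℕ} (g : Fin N × Fin N × Fin N → ℝ)
    (X Y Z : Matrix (Fin N) (Fin N) ℂ) (p q : Fin N × Fin N × Fin N) :
    ((gameTensor g p q : ℝ) : ℂ) * kron3 X Y Z p q
      = ((g p * g q : ℝ) : ℂ) * kron3 (zeroDiag X) (zeroDiag Y) (zeroDiag Z) p q := by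
  by_cases h1 : p.1 = q.1
  · simp [gameTensor, kron3, zeroDiag, h1]
  · by_cases h2 : p.2.1 = q.2.1
    · simp [gameTensor, kron3, zeroDiag, h1, h2]
    · by_cases h3 : p.2.2 = q.2.2
      · simp [gameTensor, kron3, zeroDiag, h1, h2, h3]
      · simp [gameTensor, kron3, zeroDiag, h1, h2, h3]

lemma trace_kron3 {N : ℕ} (X Y Z : Matrix (Fin N) (Fin N) ℂ) :
    (kron3 X Y Z).trace = X.trace * Y.trace * Z.trace := by
  have h1 : (kron3 X Y Z).trace = ∑ i, ∑ j, ∑ k, X i i * Y j j * Z k k := by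
    rw [Matrix.trace]
    simp only [Matrix.diag_apply, kron3]
    rw [Fintype.sum_prod_type]
    apply Finset.sum_congr rfl; intro i _
    rw [Fintype.sum_prod_type]
  have h2 : X.trace * Y.trace * Z.trace = ∑ i, ∑ j, ∑ k, X i i * Y j j * Z k k := by
    rw [Matrix.trace, Matrix.trace, Matrix.trace]
    simp only [Matrix.diag_apply]
    rw [Finset.sum_mul_sum, Finset.sum_mul]
    apply Finset.sum_congr rfl; intro i _
    rw [Finset.sum_mul]
    apply Finset.sum_congr rfl; intro j _
    rw [Finset.mul_sum]
  rw [h1, h2]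

noncomputable def TT {N : ℕ} (g : Fin N × Fin N × Fin N → ℝ)
    (X Y Z : Matrix (Fin N) (Fin N) ℂ) : ℂ :=
  ∑ p, ∑ q, ((g p * g q : ℝ) : ℂ) * kron3 X Y Z p q

lemma sum_comm3 {α β γ : Type*} [Fintype α] [Fintype β] (s : Finset γ) (f : α → β → γ → ℂ) :
    ∑ p : α, ∑ q : β, ∑ k ∈ s, f p q k = ∑ k ∈ s, ∑ p : α, ∑ q : β, f p q k := by
  calc ∑ p : α, ∑ q : β, ∑ k ∈ s, f p q k = ∑ p : α, ∑ k ∈ s, ∑ q : β, f p q k :=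
        Finset.sum_congr rfl (fun p _ => Finset.sum_comm)
    _ = _ := Finset.sum_comm

lemma TT_left {N : ℕ} (g : Fin N × Fin N × Fin N → ℝ) (n : ℕ) (c : ℕ → ℂ)
    (P : ℕ → Matrix (Fin N) (Fin N) ℂ) (Y Z : Matrix (Fin N) (Fin N) ℂ) :
    TT g (∑ k ∈ Finset.range n, c k • P k) Y Z
      = ∑ k ∈ Finset.range n, c k * TT g (P k) Y Z := by
  unfold TT
  have hent : ∀ p q, ((g p * g q : ℝ) : ℂ) * kron3 (∑ k ∈ Finset.range n, c k • P k) Y Z p q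
      = ∑ k ∈ Finset.range n, c k * (((g p * g q : ℝ) : ℂ) * kron3 (P k) Y Z p q) := by
    intro p q
    simp only [kron3, Matrix.sum_apply, Matrix.smul_apply, smul_eq_mul]
    rw [Finset.sum_mul, Finset.sum_mul, Finset.mul_sum]
    apply Finset.sum_congr rfl; intros; ring
  simp_rw [hent]
  rw [sum_comm3]
  apply Finset.sum_congr rfl; intro k _
  rw [Finset.mul_sum]
  apply Finset.sum_congr rfl; intro p _
  rw [Finset.mul_sum]

lemma TT_mid {N : ℕ} (g : Fin N × Fin N × Fin N → ℝ) (n : ℕ) (c : ℕ → ℂ)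
    (P : ℕ → Matrix (Fin N) (Fin N) ℂ) (X Z : Matrix (Fin N) (Fin N) ℂ) :
    TT g X (∑ k ∈ Finset.range n, c k • P k) Z
      = ∑ k ∈ Finset.range n, c k * TT g X (P k) Z := by
  unfold TT
  have hent : ∀ p q, ((g p * g q : ℝ) : ℂ) * kron3 X (∑ k ∈ Finset.range n, c k • P k) Z p q
      = ∑ k ∈ Finset.range n, c k * (((g p * g q : ℝ) : ℂ) * kron3 X (P k) Z p q) := by
    intro p q
    simp only [kron3, Matrix.sum_apply, Matrix.smul_apply, smul_eq_mul]
    rw [Finset.mul_sum, Finset.sum_mul, Finset.mul_sum]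
    apply Finset.sum_congr rfl; intros; ring
  simp_rw [hent]
  rw [sum_comm3]
  apply Finset.sum_congr rfl; intro k _
  rw [Finset.mul_sum]
  apply Finset.sum_congr rfl; intro p _
  rw [Finset.mul_sum]

lemma TT_right {N : ℕ} (g : Fin N × Fin N × Fin N → ℝ) (n : ℕ) (c : ℕ → ℂ)
    (P : ℕ → Matrix (Fin N) (Fin N) ℂ) (X Y : Matrix (Fin N) (Fin N) ℂ) :
    TT g X Y (∑ k ∈ Finset.range n, c k • P k)
      = ∑ k ∈ Finset.range n, c k * TT g X Y (P k) := by
  unfold TT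
  have hent : ∀ p q, ((g p * g q : ℝ) : ℂ) * kron3 X Y (∑ k ∈ Finset.range n, c k • P k) p q
      = ∑ k ∈ Finset.range n, c k * (((g p * g q : ℝ) : ℂ) * kron3 X Y (P k) p q) := by
    intro p q
    simp only [kron3, Matrix.sum_apply, Matrix.smul_apply, smul_eq_mul]
    rw [Finset.mul_sum, Finset.mul_sum]
    apply Finset.sum_congr rfl; intros; ring
  simp_rw [hent]
  rw [sum_comm3]
  apply Finset.sum_congr rfl; intro k _
  rw [Finset.mul_sum]
  apply Finset.sum_congr rfl; intro p _
  rw [Finset.mul_sum]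

lemma sum_range_two_blocks {M : Type*} [AddCommMonoid M] (f : ℕ → M) (n m : ℕ) :
    ∑ i ∈ Finset.range (n + m), f i
      = ∑ i ∈ Finset.range n, f i + ∑ i ∈ Finset.range m, f (n + i) := by
  induction m with
  | zero => simp
  | succ m ih => rw [← Nat.add_assoc, Finset.sum_range_succ, ih, Finset.sum_range_succ, add_assoc]

/-- If `M` bounds `|⟨g|X⊗Y⊗Z|g⟩ − Tr(X⊗Y⊗Z)|` over all triples of
normalized projectors, then `‖T‖_{2,2,2} ≤ 64 (ln N)^{3/2} · M`, i.e. for all Hermitian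
`X, Y, Z` of Frobenius norm at most 1, `|⟨T, X⊗Y⊗Z⟩| ≤ 64 (ln N)^{3/2} · M`. -/
theorem trilinear_norm_le_projector_sup
    (N : ℕ) (hN : 1 < N) (g : Fin N × Fin N × Fin N → ℝ) (M : ℝ)
    (hM : ∀ X Y Z : Matrix (Fin N) (Fin N) ℂ,
      IsNormalizedProjector X → IsNormalizedProjector Y → IsNormalizedProjector Z →
      ‖(∑ p, ∑ q, ((g p * g q : ℝ) : ℂ) * kron3 X Y Z p q)
        - (kron3 X Y Z).trace‖ ≤ M) :
    ∀ X Y Z : Matrix (Fin N) (Fin N) ℂ,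
      X.IsHermitian → Y.IsHermitian → Z.IsHermitian →
      frobNorm X ≤ 1 → frobNorm Y ≤ 1 → frobNorm Z ≤ 1 →
      ‖∑ p, ∑ q, ((gameTensor g p q : ℝ) : ℂ) * kron3 X Y Z p q‖ ≤
        64 * (Real.log N) ^ ((3 : ℝ) / 2) * M := by
  intro X Y Z hX hY hZ hfX hfY hfZ
  have hN0 : 0 < N := by omega
  set L := Real.log N with hLdef
  have hlog2 : Real.log 2 ≤ L := by
    rw [hLdef]
    exact Real.log_le_log (by norm_num) (by exact_mod_cast hN)
  have hL7 : (1:ℝ)/7 ≤ L := by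
    have := Real.log_two_gt_d9
    linarith
  have hL0 : (0:ℝ) ≤ L := le_trans (by norm_num) hL7
  have hbound : Real.sqrt 2 * Real.sqrt (1 + L) ≤ 4 * Real.sqrt L := by
    rw [← Real.sqrt_mul (by norm_num)]
    have h16 : (4:ℝ) * Real.sqrt L = Real.sqrt (16 * L) := by
      rw [Real.sqrt_mul (by norm_num), show (16:ℝ) = 4^2 by norm_num,
        Real.sqrt_sq (by norm_num)]
    rw [h16]
    apply Real.sqrt_le_sqrt
    linarith
  have hMnn : 0 ≤ M := by
    have hid : IsNormalizedProjector
        (((Real.sqrt ((1 : Matrix (Fin N) (Fin N) ℂ).rank))⁻¹ : ℂ) •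
          (1 : Matrix (Fin N) (Fin N) ℂ)) := by
      refine ⟨1, Matrix.isHermitian_one, one_mul 1, ?_, rfl⟩
      rw [Matrix.rank_one, Fintype.card_fin]; omega
    exact le_trans (norm_nonneg _) (hM _ _ _ hid hid hid)
  -- decompositions of the off-diagonal parts
  obtain ⟨cX1, cX2, PX1, PX2, hPX, hcX0, hXeq, hXsum⟩ :=
    decompHerm hN0 (zeroDiag_herm hX) (le_trans (zeroDiag_frob_le X) hfX)
  obtain ⟨cY1, cY2, PY1, PY2, hPY, hcY0, hYeq, hYsum⟩ :=
    decompHerm hN0 (zeroDiag_herm hY) (le_trans (zeroDiag_frob_le Y) hfY)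
  obtain ⟨cZ1, cZ2, PZ1, PZ2, hPZ, hcZ0, hZeq, hZsum⟩ :=
    decompHerm hN0 (zeroDiag_herm hZ) (le_trans (zeroDiag_frob_le Z) hfZ)
  set cX : ℕ → ℝ := fun k => if k < N then cX1 k else -(cX2 (k - N)) with hcXdef
  set PX : ℕ → Matrix (Fin N) (Fin N) ℂ := fun k => if k < N then PX1 k else PX2 (k - N)
    with hPXdef
  set cY : ℕ → ℝ := fun k => if k < N then cY1 k else -(cY2 (k - N)) with hcYdef
  set PY : ℕ → Matrix (Fin N) (Fin N) ℂ := fun k => if k < N then PY1 k else PY2 (k - N)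
    with hPYdef
  set cZ : ℕ → ℝ := fun k => if k < N then cZ1 k else -(cZ2 (k - N)) with hcZdef
  set PZ : ℕ → Matrix (Fin N) (Fin N) ℂ := fun k => if k < N then PZ1 k else PZ2 (k - N)
    with hPZdef
  -- generic facts about merged families
  have merge : ∀ (c1 c2 : ℕ → ℝ) (P1 P2 : ℕ → Matrix (Fin N) (Fin N) ℂ),
      (∑ k ∈ Finset.range N, ((c1 k : ℝ) : ℂ) • P1 k)
        - ∑ k ∈ Finset.range N, ((c2 k : ℝ) : ℂ) • P2 k
      = ∑ k ∈ Finset.range (N + N),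
          (((if k < N then c1 k else -(c2 (k - N))) : ℝ) : ℂ) •
            (if k < N then P1 k else P2 (k - N)) := by
    intro c1 c2 P1 P2
    rw [sum_range_two_blocks, sub_eq_add_neg]
    congr 1
    · apply Finset.sum_congr rfl
      intro k hk
      have hkN : k < N := Finset.mem_range.mp hk
      rw [if_pos hkN, if_pos hkN]
    · rw [← Finset.sum_neg_distrib]
      apply Finset.sum_congr rfl
      intro i hi
      have h1 : ¬ (N + i < N) := by omega
      have h2 : N + i - N = i := by omega
      rw [if_neg h1, if_neg h1, h2]
      push_cast
      rw [neg_smul]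
  have hXdec : zeroDiag X = ∑ k ∈ Finset.range (N + N), ((cX k : ℝ) : ℂ) • PX k := by
    rw [hXeq, hcXdef, hPXdef]; exact merge cX1 cX2 PX1 PX2
  have hYdec : zeroDiag Y = ∑ k ∈ Finset.range (N + N), ((cY k : ℝ) : ℂ) • PY k := by
    rw [hYeq, hcYdef, hPYdef]; exact merge cY1 cY2 PY1 PY2
  have hZdec : zeroDiag Z = ∑ k ∈ Finset.range (N + N), ((cZ k : ℝ) : ℂ) • PZ k := by
    rw [hZeq, hcZdef, hPZdef]; exact merge cZ1 cZ2 PZ1 PZ2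
  have projmerge : ∀ (P1 P2 : ℕ → Matrix (Fin N) (Fin N) ℂ),
      (∀ k ∈ Finset.range N, IsNormalizedProjector (P1 k) ∧ IsNormalizedProjector (P2 k)) →
      ∀ k ∈ Finset.range (N + N),
        IsNormalizedProjector (if k < N then P1 k else P2 (k - N)) := by
    intro P1 P2 hP k hk
    by_cases hkN : k < N
    · rw [if_pos hkN]; exact (hP k (Finset.mem_range.mpr hkN)).1
    · rw [if_neg hkN]
      have : k - N < N := by
        have := Finset.mem_range.mp hk; omega
      exact (hP (k - N) (Finset.mem_range.mpr this)).2
  have hXproj : ∀ k ∈ Finset.range (N + N), IsNormalizedProjector (PX k) := by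
    rw [hPXdef]; exact projmerge PX1 PX2 hPX
  have hYproj : ∀ k ∈ Finset.range (N + N), IsNormalizedProjector (PY k) := by
    rw [hPYdef]; exact projmerge PY1 PY2 hPY
  have hZproj : ∀ k ∈ Finset.range (N + N), IsNormalizedProjector (PZ k) := by
    rw [hPZdef]; exact projmerge PZ1 PZ2 hPZ
  have absmerge : ∀ (c1 c2 : ℕ → ℝ), (∀ k, 0 ≤ c1 k ∧ 0 ≤ c2 k) →
      (∑ k ∈ Finset.range N, c1 k) + (∑ k ∈ Finset.range N, c2 k)
        ≤ Real.sqrt 2 * Real.sqrt (1 + L) →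
      ∑ k ∈ Finset.range (N + N), |if k < N then c1 k else -(c2 (k - N))|
        ≤ 4 * Real.sqrt L := by
    intro c1 c2 hc0 hcs
    rw [sum_range_two_blocks]
    have h1 : ∑ k ∈ Finset.range N, |if k < N then c1 k else -(c2 (k - N))|
        = ∑ k ∈ Finset.range N, c1 k := by
      apply Finset.sum_congr rfl
      intro k hk
      rw [if_pos (Finset.mem_range.mp hk)]
      exact abs_of_nonneg (hc0 k).1
    have h2 : ∑ i ∈ Finset.range N, |if N + i < N then c1 (N + i) else -(c2 (N + i - N))|
        = ∑ i ∈ Finset.range N, c2 i := by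
      apply Finset.sum_congr rfl
      intro i hi
      rw [if_neg (by omega), show N + i - N = i from by omega, abs_neg]
      exact abs_of_nonneg (hc0 i).2
    rw [h1, h2]
    exact le_trans hcs hbound
  have hXabs : ∑ k ∈ Finset.range (N + N), |cX k| ≤ 4 * Real.sqrt L := by
    rw [hcXdef]; exact absmerge cX1 cX2 hcX0 hXsum
  have hYabs : ∑ k ∈ Finset.range (N + N), |cY k| ≤ 4 * Real.sqrt L := by
    rw [hcYdef]; exact absmerge cY1 cY2 hcY0 hYsum
  have hZabs : ∑ k ∈ Finset.range (N + N), |cZ k| ≤ 4 * Real.sqrt L := by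
    rw [hcZdef]; exact absmerge cZ1 cZ2 hcZ0 hZsum
  -- rewrite LHS via zeroDiag
  have hLHS : (∑ p, ∑ q, ((gameTensor g p q : ℝ) : ℂ) * kron3 X Y Z p q)
      = TT g (zeroDiag X) (zeroDiag Y) (zeroDiag Z) := by
    unfold TT
    apply Finset.sum_congr rfl; intro p _
    apply Finset.sum_congr rfl; intro q _
    exact gameTensor_entry g X Y Z p q
  rw [hLHS]
  -- trilinear expansion
  have hexpA : TT g (zeroDiag X) (zeroDiag Y) (zeroDiag Z)
      = ∑ a ∈ Finset.range (N + N), ∑ b ∈ Finset.range (N + N), ∑ c ∈ Finset.range (N + N),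
          (((cX a : ℝ) : ℂ) * ((cY b : ℝ) : ℂ) * ((cZ c : ℝ) : ℂ))
            * TT g (PX a) (PY b) (PZ c) := by
    rw [hXdec, TT_left]
    apply Finset.sum_congr rfl; intro a _
    rw [hYdec, TT_mid, Finset.mul_sum]
    apply Finset.sum_congr rfl; intro b _
    rw [hZdec, TT_right, Finset.mul_sum, Finset.mul_sum]
    apply Finset.sum_congr rfl; intro c _
    ring
  have htrX : (zeroDiag X).trace = ∑ a ∈ Finset.range (N + N), ((cX a : ℝ) : ℂ) * (PX a).trace := by
    rw [hXdec, Matrix.trace_sum]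
    apply Finset.sum_congr rfl; intro a _
    rw [Matrix.trace_smul]; rfl
  have htrY : (zeroDiag Y).trace = ∑ b ∈ Finset.range (N + N), ((cY b : ℝ) : ℂ) * (PY b).trace := by
    rw [hYdec, Matrix.trace_sum]
    apply Finset.sum_congr rfl; intro b _
    rw [Matrix.trace_smul]; rfl
  have htrZ : (zeroDiag Z).trace = ∑ c ∈ Finset.range (N + N), ((cZ c : ℝ) : ℂ) * (PZ c).trace := by
    rw [hZdec, Matrix.trace_sum]
    apply Finset.sum_congr rfl; intro c _
    rw [Matrix.trace_smul]; rfl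
  have hexpB : (0 : ℂ)
      = ∑ a ∈ Finset.range (N + N), ∑ b ∈ Finset.range (N + N), ∑ c ∈ Finset.range (N + N),
          (((cX a : ℝ) : ℂ) * ((cY b : ℝ) : ℂ) * ((cZ c : ℝ) : ℂ))
            * (kron3 (PX a) (PY b) (PZ c)).trace := by
    have h0 : (zeroDiag X).trace * (zeroDiag Y).trace * (zeroDiag Z).trace = 0 := by
      rw [zeroDiag_trace]; ring
    rw [← h0, htrX, htrY, htrZ, Finset.sum_mul_sum, Finset.sum_mul]
    apply Finset.sum_congr rfl; intro a _
    rw [Finset.sum_mul]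
    apply Finset.sum_congr rfl; intro b _
    rw [Finset.mul_sum]
    apply Finset.sum_congr rfl; intro c _
    rw [trace_kron3]
    ring
  have hexp : TT g (zeroDiag X) (zeroDiag Y) (zeroDiag Z)
      = ∑ a ∈ Finset.range (N + N), ∑ b ∈ Finset.range (N + N), ∑ c ∈ Finset.range (N + N),
          (((cX a : ℝ) : ℂ) * ((cY b : ℝ) : ℂ) * ((cZ c : ℝ) : ℂ))
            * (TT g (PX a) (PY b) (PZ c) - (kron3 (PX a) (PY b) (PZ c)).trace) := by
    calc TT g (zeroDiag X) (zeroDiag Y) (zeroDiag Z)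
        = TT g (zeroDiag X) (zeroDiag Y) (zeroDiag Z) - 0 := by ring
      _ = _ := by
          rw [hexpA]
          conv_lhs => rw [hexpB]
          rw [← Finset.sum_sub_distrib]
          apply Finset.sum_congr rfl; intro a _
          rw [← Finset.sum_sub_distrib]
          apply Finset.sum_congr rfl; intro b _
          rw [← Finset.sum_sub_distrib]
          apply Finset.sum_congr rfl; intro c _
          ring
  rw [hexp]
  -- absolute value bound
  have habs : ‖∑ a ∈ Finset.range (N + N), ∑ b ∈ Finset.range (N + N),
        ∑ c ∈ Finset.range (N + N),
        (((cX a : ℝ) : ℂ) * ((cY b : ℝ) : ℂ) * ((cZ c : ℝ) : ℂ))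
          * (TT g (PX a) (PY b) (PZ c) - (kron3 (PX a) (PY b) (PZ c)).trace)‖
      ≤ ∑ a ∈ Finset.range (N + N), ∑ b ∈ Finset.range (N + N), ∑ c ∈ Finset.range (N + N),
          |cX a| * (|cY b| * (|cZ c| * M)) := by
    apply le_trans (norm_sum_le _ _)
    apply Finset.sum_le_sum; intro a ha
    apply le_trans (norm_sum_le _ _)
    apply Finset.sum_le_sum; intro b hb
    apply le_trans (norm_sum_le _ _)
    apply Finset.sum_le_sum; intro c hc
    have hD : ‖TT g (PX a) (PY b) (PZ c) - (kron3 (PX a) (PY b) (PZ c)).trace‖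
        ≤ M := hM (PX a) (PY b) (PZ c) (hXproj a ha) (hYproj b hb) (hZproj c hc)
    calc ‖(((cX a : ℝ) : ℂ) * ((cY b : ℝ) : ℂ) * ((cZ c : ℝ) : ℂ))
            * (TT g (PX a) (PY b) (PZ c) - (kron3 (PX a) (PY b) (PZ c)).trace)‖
        = |cX a| * |cY b| * |cZ c|
          * ‖TT g (PX a) (PY b) (PZ c) - (kron3 (PX a) (PY b) (PZ c)).trace‖ := by
          rw [norm_mul, norm_mul, norm_mul,
            Complex.norm_real, Complex.norm_real, Complex.norm_real,
            Real.norm_eq_abs, Real.norm_eq_abs, Real.norm_eq_abs]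
      _ ≤ |cX a| * |cY b| * |cZ c| * M := by
          apply mul_le_mul_of_nonneg_left hD
          positivity
      _ = |cX a| * (|cY b| * (|cZ c| * M)) := by ring
  apply le_trans habs
  -- factor the triple sum
  have hfact : ∑ a ∈ Finset.range (N + N), ∑ b ∈ Finset.range (N + N),
        ∑ c ∈ Finset.range (N + N), |cX a| * (|cY b| * (|cZ c| * M))
      = (∑ a ∈ Finset.range (N + N), |cX a|)
        * ((∑ b ∈ Finset.range (N + N), |cY b|)
          * ((∑ c ∈ Finset.range (N + N), |cZ c|) * M)) := by
    have inner : ∀ a b, ∑ c ∈ Finset.range (N + N), |cX a| * (|cY b| * (|cZ c| * M))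
        = |cX a| * (|cY b| * ((∑ c ∈ Finset.range (N + N), |cZ c|) * M)) := by
      intro a b
      rw [← Finset.mul_sum, ← Finset.mul_sum, ← Finset.sum_mul]
    have mid : ∀ a, ∑ b ∈ Finset.range (N + N), ∑ c ∈ Finset.range (N + N),
          |cX a| * (|cY b| * (|cZ c| * M))
        = |cX a| * ((∑ b ∈ Finset.range (N + N), |cY b|)
            * ((∑ c ∈ Finset.range (N + N), |cZ c|) * M)) := by
      intro a
      rw [Finset.sum_congr rfl (fun b _ => inner a b), ← Finset.mul_sum, ← Finset.sum_mul]
    rw [Finset.sum_congr rfl (fun a _ => mid a), ← Finset.sum_mul]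
  rw [hfact]
  -- numeric finish
  have hXnn : (0:ℝ) ≤ ∑ a ∈ Finset.range (N + N), |cX a| :=
    Finset.sum_nonneg fun a _ => abs_nonneg _
  have hYnn : (0:ℝ) ≤ ∑ b ∈ Finset.range (N + N), |cY b| :=
    Finset.sum_nonneg fun b _ => abs_nonneg _
  have hZnn : (0:ℝ) ≤ ∑ c ∈ Finset.range (N + N), |cZ c| :=
    Finset.sum_nonneg fun c _ => abs_nonneg _
  have hsq : (0:ℝ) ≤ 4 * Real.sqrt L := by positivity
  have step : (∑ a ∈ Finset.range (N + N), |cX a|)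
      * ((∑ b ∈ Finset.range (N + N), |cY b|)
        * ((∑ c ∈ Finset.range (N + N), |cZ c|) * M))
      ≤ (4 * Real.sqrt L) * ((4 * Real.sqrt L) * ((4 * Real.sqrt L) * M)) := by
    have s1 : (∑ c ∈ Finset.range (N + N), |cZ c|) * M ≤ (4 * Real.sqrt L) * M :=
      mul_le_mul_of_nonneg_right hZabs hMnn
    have s1nn : (0:ℝ) ≤ (∑ c ∈ Finset.range (N + N), |cZ c|) * M := mul_nonneg hZnn hMnn
    have s2 : (∑ b ∈ Finset.range (N + N), |cY b|)
        * ((∑ c ∈ Finset.range (N + N), |cZ c|) * M)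
        ≤ (4 * Real.sqrt L) * ((4 * Real.sqrt L) * M) :=
      mul_le_mul hYabs s1 s1nn hsq
    have s2nn : (0:ℝ) ≤ (∑ b ∈ Finset.range (N + N), |cY b|)
        * ((∑ c ∈ Finset.range (N + N), |cZ c|) * M) :=
      mul_nonneg hYnn s1nn
    exact mul_le_mul hXabs s2 s2nn (by positivity)
  apply le_trans step
  have hcube : Real.sqrt L ^ 3 = L ^ ((3:ℝ)/2) := by
    rw [← Real.rpow_natCast (Real.sqrt L) 3, Real.sqrt_eq_rpow, ← Real.rpow_mul hL0]
    norm_num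
  have : (4 * Real.sqrt L) * ((4 * Real.sqrt L) * ((4 * Real.sqrt L) * M))
      = 64 * Real.sqrt L ^ 3 * M := by ring
  rw [this, hcube]
end

section
/- Let M_1,…,M_Q be Hermitian matrices, C_1,…,C_Q be Hermitian unitary matrices, and |ψ⟩ a unit vector in the tensor product space. Then Σ_{k=1}^Q ⟨ψ| M_k ⊗ C_k |ψ⟩ ≤ √Q · max over unit vectors |φ⟩ and sign functions ζ : [Q] → {±1} of ⟨φ| Σ_k ζ(k) M_k ⊗ I |φ⟩. -/
open Matrix Finset
open scoped InnerProductSpace Kronecker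

variable {n : Type*} [Fintype n]

/-- View a plain function as an element of Euclidean space. -/
def vE (v : n → ℂ) : EuclideanSpace ℂ n := WithLp.toLp 2 v

@[simp] lemma vE_apply (v : n → ℂ) (p : n) : vE v p = v p := rfl

lemma inner_vE (u v : n → ℂ) :
    ⟪vE u, vE v⟫_ℂ = ∑ p, (starRingEnd ℂ) (u p) * v p := by
  simp [PiLp.inner_apply, RCLike.inner_apply]
  exact Finset.sum_congr rfl fun _ _ => mul_comm _ _

lemma inner_mulVec' (X : Matrix n n ℂ) (u v : n → ℂ) :
    ⟪vE u, vE (X.mulVec v)⟫_ℂ = ∑ p, ∑ q, (starRingEnd ℂ) (u p) * X p q * v q := by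
  simp only [inner_vE, Matrix.mulVec, dotProduct, Finset.mul_sum]
  exact Finset.sum_congr rfl fun p _ => Finset.sum_congr rfl fun q _ => by ring

lemma herm_inner_mulVec (X : Matrix n n ℂ) (hX : X.IsHermitian) (u v : n → ℂ) :
    ⟪vE (X.mulVec u), vE v⟫_ℂ = ⟪vE u, vE (X.mulVec v)⟫_ℂ := by
  simp only [inner_vE, Matrix.mulVec, dotProduct, map_sum, _root_.map_mul,
    Finset.sum_mul, Finset.mul_sum]
  rw [Finset.sum_comm]
  refine Finset.sum_congr rfl fun p _ => Finset.sum_congr rfl fun q _ => ?_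
  have h : (starRingEnd ℂ) (X q p) = X p q := congrFun (congrFun hX p) q
  rw [← h]
  ring

lemma norm_sq_vE (u : n → ℂ) : ‖vE u‖ ^ 2 = ∑ p, Complex.normSq (u p) := by
  rw [EuclideanSpace.norm_eq, Real.sq_sqrt (by positivity)]
  exact Finset.sum_congr rfl fun p _ => by
    rw [Complex.normSq_eq_norm_sq]; rfl

section Signs

/-- sign of a boolean -/
def sg (s : Bool) : ℝ := if s then 1 else -1

@[simp] lemma sg_mul_self (s : Bool) : sg s * sg s = 1 := by cases s <;> simp [sg]

lemma sg_not (s : Bool) : sg (!s) = - sg s := by cases s <;> simp [sg]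

lemma isSign_sg {Q : ℕ} (s : Fin Q → Bool) : ∀ k, sg (s k) = 1 ∨ sg (s k) = -1 := by
  intro k; cases s k <;> simp [sg]

lemma sum_sg_mul_sg {Q : ℕ} (k l : Fin Q) :
    ∑ s : Fin Q → Bool, sg (s k) * sg (s l) = if k = l then (2 ^ Q : ℝ) else 0 := by
  classical
  split_ifs with h
  · subst h
    simp [Finset.card_univ]
  · apply Finset.sum_ninvolution (fun s => Function.update s k (!s k))
    · intro s
      rw [Function.update_self, Function.update_of_ne (Ne.symm fun hh => h hh)]
      rw [sg_not]; ring
    · intro s _ hupd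
      have := congrFun hupd k
      rw [Function.update_self] at this
      cases s k <;> simp_all
    · intro s; exact Finset.mem_univ _
    · intro s
      ext j
      by_cases hj : j = k
      · subst hj; simp
      · simp [Function.update_of_ne hj]

end Signs

lemma sum_signs_inner {Q : ℕ} (a b : Fin Q → EuclideanSpace ℂ n) :
    ∑ s : Fin Q → Bool, ⟪∑ k, (sg (s k) : ℂ) • a k, ∑ k, (sg (s k) : ℂ) • b k⟫_ℂ
      = (2 ^ Q : ℂ) * ∑ k, ⟪a k, b k⟫_ℂ := by
  classical
  have key : ∀ s : Fin Q → Bool, ⟪∑ k, (sg (s k) : ℂ) • a k, ∑ k, (sg (s k) : ℂ) • b k⟫_ℂ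
      = ∑ k, ∑ l, ((sg (s k) * sg (s l) : ℝ) : ℂ) * ⟪a k, b l⟫_ℂ := by
    intro s
    rw [sum_inner]
    refine Finset.sum_congr rfl fun k _ => ?_
    rw [inner_sum]
    refine Finset.sum_congr rfl fun l _ => ?_
    rw [inner_smul_left, inner_smul_right, Complex.conj_ofReal]
    push_cast
    ring
  simp_rw [key]
  rw [Finset.sum_comm]
  have step : ∀ k : Fin Q, ∑ s : Fin Q → Bool, ∑ l, ((sg (s k) * sg (s l) : ℝ) : ℂ) * ⟪a k, b l⟫_ℂ
      = (2 ^ Q : ℂ) * ⟪a k, b k⟫_ℂ := by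
    intro k
    rw [Finset.sum_comm]
    have : ∀ l : Fin Q, ∑ s : Fin Q → Bool, ((sg (s k) * sg (s l) : ℝ) : ℂ) * ⟪a k, b l⟫_ℂ
        = (if k = l then (2 ^ Q : ℂ) else 0) * ⟪a k, b l⟫_ℂ := by
      intro l
      rw [← Finset.sum_mul, ← Complex.ofReal_sum, sum_sg_mul_sg]
      split_ifs <;> simp
    simp_rw [this]
    simp [Finset.sum_ite_eq, ite_mul]
  simp_rw [step]
  rw [Finset.mul_sum]

@[simp] lemma vE_sum {ι : Type*} (t : Finset ι) (f : ι → n → ℂ) :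
    vE (∑ i ∈ t, f i) = ∑ i ∈ t, vE (f i) := WithLp.toLp_sum _ _ _ _

@[simp] lemma vE_smul (c : ℂ) (u : n → ℂ) : vE (c • u) = c • vE u := rfl

@[simp] lemma vE_add (u v : n → ℂ) : vE (u + v) = vE u + vE v := rfl
@[simp] lemma vE_sub (u v : n → ℂ) : vE (u - v) = vE u - vE v := rfl

lemma sum_smul_mulVec {Q : ℕ} (c : Fin Q → ℂ) (K : Fin Q → Matrix n n ℂ) (ψ : n → ℂ) :
    (∑ k, c k • K k).mulVec ψ = ∑ k, c k • (K k).mulVec ψ := by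
  funext p
  simp only [Matrix.mulVec, dotProduct, Finset.sum_apply, Matrix.sum_apply,
    Matrix.smul_apply, Pi.smul_apply, smul_eq_mul, Finset.sum_mul, Finset.mul_sum]
  rw [Finset.sum_comm]
  exact Finset.sum_congr rfl fun k _ => Finset.sum_congr rfl fun q _ => by ring

lemma herm_sum_smul {Q : ℕ} (r : Fin Q → ℝ) (K : Fin Q → Matrix n n ℂ)
    (hK : ∀ k, (K k).IsHermitian) : (∑ k, (r k : ℂ) • K k).IsHermitian := by
  apply Matrix.IsHermitian.ext
  intro i j
  simp only [Matrix.sum_apply, Matrix.smul_apply, star_sum, smul_eq_mul, Complex.star_def,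
    Complex.conj_ofReal]
  refine Finset.sum_congr rfl fun k _ => ?_
  have h := (hK k).apply i j
  rw [Complex.star_def] at h
  rw [RingHom.map_mul, Complex.conj_ofReal, h]

lemma kron_herm {D d : ℕ} {M : Matrix (Fin D) (Fin D) ℂ} {C : Matrix (Fin d) (Fin d) ℂ}
    (hM : M.IsHermitian) (hC : C.IsHermitian) : (M ⊗ₖ C).IsHermitian := by
  apply Matrix.IsHermitian.ext
  intro i j
  have h1 := hM.apply i.1 j.1
  have h2 := hC.apply i.2 j.2
  simp only [Matrix.kroneckerMap_apply, star_mul', Complex.star_def] at *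
  rw [h1, h2, mul_comm]

example (D d : ℕ) (M : Matrix (Fin D) (Fin D) ℂ) (C : Matrix (Fin d) (Fin d) ℂ) (v : Fin D × Fin d → ℂ) :
    (M ⊗ₖ (1 : Matrix (Fin d) (Fin d) ℂ)).mulVec (((1 : Matrix (Fin D) (Fin D) ℂ) ⊗ₖ C).mulVec v)
      = (M ⊗ₖ C).mulVec v := by
  rw [Matrix.mulVec_mulVec, ← Matrix.mul_kronecker_mul, mul_one, one_mul]

example (d : ℕ) (v : Fin d → ℂ) : (1 : Matrix (Fin d) (Fin d) ℂ).mulVec v = v := Matrix.one_mulVec v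

example (D d : ℕ) (C C' : Matrix (Fin d) (Fin d) ℂ) :
    ((1 : Matrix (Fin D) (Fin D) ℂ) ⊗ₖ C) * (1 ⊗ₖ C') = 1 ⊗ₖ (C * C') := by
  rw [← Matrix.mul_kronecker_mul, one_mul]

example (d : ℕ) : ((1 : Matrix (Fin d) (Fin d) ℂ) ⊗ₖ (1 : Matrix (Fin d) (Fin d) ℂ)) = 1 :=
  Matrix.one_kronecker_one

example (n' : Type) [Fintype n'] (X : Matrix n' n' ℂ) (c : ℂ) (v : n' → ℂ) :
    X.mulVec (c • v) = c • X.mulVec v := Matrix.mulVec_smul X c v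
/-- A `±1`-valued (classical) strategy. -/
def IsSign {Q : ℕ} (ζ : Fin Q → ℝ) : Prop := ∀ k, ζ k = 1 ∨ ζ k = -1

/-- Decoupling lemma: for Hermitian `M k`, Hermitian unitary `C k` and a
unit vector `ψ` in the tensor product space,
`∑ k ⟨ψ|M k ⊗ C k|ψ⟩ ≤ √Q · max_{φ, ζ} ⟨φ|∑ k ζ k · (M k ⊗ I)|φ⟩`
(the maximum over unit vectors `φ` and signs `ζ` is expressed via an arbitrary upper
bound `c`). -/
theorem decoupling_third_player
    (Q D d : ℕ) (M : Fin Q → Matrix (Fin D) (Fin D) ℂ)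
    (hM : ∀ k, (M k).IsHermitian)
    (C : Fin Q → Matrix (Fin d) (Fin d) ℂ)
    (hCherm : ∀ k, (C k).IsHermitian) (hCunit : ∀ k, C k * C k = 1)
    (ψ : Fin D × Fin d → ℂ) (hψ : (∑ p, Complex.normSq (ψ p)) = 1)
    (c : ℝ)
    (hc : ∀ φ : Fin D × Fin d → ℂ, (∑ p, Complex.normSq (φ p)) = 1 →
      ∀ ζ : Fin Q → ℝ, IsSign ζ →
        (∑ k, (ζ k : ℂ) * ∑ p, ∑ q, (starRingEnd ℂ) (φ p) *
          (M k p.1 q.1 * (if p.2 = q.2 then 1 else 0)) * φ q).re ≤ c) :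
    (∑ k, ∑ p, ∑ q, (starRingEnd ℂ) (ψ p) *
        (M k p.1 q.1 * C k p.2 q.2) * ψ q).re ≤ Real.sqrt Q * c := by
  classical
  set K1 : Fin Q → Matrix (Fin D × Fin d) (Fin D × Fin d) ℂ :=
    fun k => M k ⊗ₖ (1 : Matrix (Fin d) (Fin d) ℂ) with hK1def
  set K2 : Fin Q → Matrix (Fin D × Fin d) (Fin D × Fin d) ℂ :=
    fun k => (1 : Matrix (Fin D) (Fin D) ℂ) ⊗ₖ C k with hK2def
  have hK1 : ∀ k, (K1 k).IsHermitian := fun k => kron_herm (hM k) Matrix.isHermitian_one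
  have hK2 : ∀ k, (K2 k).IsHermitian := fun k => kron_herm Matrix.isHermitian_one (hCherm k)
  set a : Fin Q → EuclideanSpace ℂ (Fin D × Fin d) := fun k => vE ((K1 k).mulVec ψ) with hadef
  set b : Fin Q → EuclideanSpace ℂ (Fin D × Fin d) := fun k => vE ((K2 k).mulVec ψ) with hbdef
  have hinnerψ : ⟪vE ψ, vE ψ⟫_ℂ = 1 := by
    rw [inner_vE]
    have h1 : ∀ p ∈ (Finset.univ : Finset (Fin D × Fin d)),
        (starRingEnd ℂ) (ψ p) * ψ p = ((Complex.normSq (ψ p) : ℝ) : ℂ) := fun p _ => by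
      rw [mul_comm, Complex.mul_conj]
    rw [Finset.sum_congr rfl h1, ← Complex.ofReal_sum, hψ, Complex.ofReal_one]
  have hnormψ : ‖vE ψ‖ = 1 := by
    have h := norm_sq_vE ψ
    rw [hψ] at h
    nlinarith [norm_nonneg (vE ψ)]
  have hab : ∀ k, (∑ p, ∑ q, (starRingEnd ℂ) (ψ p) * (M k p.1 q.1 * C k p.2 q.2) * ψ q)
      = ⟪a k, b k⟫_ℂ := by
    intro k
    rw [hadef, hbdef]
    rw [herm_inner_mulVec _ (hK1 k), Matrix.mulVec_mulVec]
    have hkk : K1 k * K2 k = M k ⊗ₖ C k := by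
      rw [hK1def, hK2def, ← Matrix.mul_kronecker_mul, mul_one, one_mul]
    rw [hkk, inner_mulVec']
    rfl
  have hbk : ∀ k, ⟪b k, b k⟫_ℂ = 1 := by
    intro k
    rw [hbdef]
    rw [herm_inner_mulVec _ (hK2 k), Matrix.mulVec_mulVec]
    have hkk : K2 k * K2 k = 1 := by
      rw [hK2def, ← Matrix.mul_kronecker_mul, one_mul, hCunit k, Matrix.one_kronecker_one]
    rw [hkk, Matrix.one_mulVec, hinnerψ]
  have hc0 : 0 ≤ c := by
    have h1 := hc ψ hψ (fun _ => 1) (fun k => Or.inl rfl)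
    have h2 := hc ψ hψ (fun _ => -1) (fun k => Or.inr rfl)
    simp only [Complex.ofReal_one, Complex.ofReal_neg, one_mul, neg_one_mul,
      Finset.sum_neg_distrib, Complex.neg_re] at h1 h2
    linarith
  -- quadratic form bound
  have quad : ∀ ζ : Fin Q → ℝ, IsSign ζ → ∀ u : Fin D × Fin d → ℂ,
      (⟪vE u, vE ((∑ k, (ζ k : ℂ) • K1 k).mulVec u)⟫_ℂ).re ≤ c * ‖vE u‖ ^ 2 := by
    intro ζ hζ u
    by_cases hu : u = 0
    · subst hu
      have : vE (0 : (Fin D × Fin d) → ℂ) = 0 := rfl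
      simp [this]
    · have ht : 0 < ‖vE u‖ := by
        rw [norm_pos_iff]
        intro h0
        exact hu ((WithLp.toLp_eq_zero 2).1 h0)
      set t : ℝ := ‖vE u‖ with htdef
      set φ : Fin D × Fin d → ℂ := fun p => ((t⁻¹ : ℝ) : ℂ) * u p with hφdef
      have hφu : φ = ((t⁻¹ : ℝ) : ℂ) • u := by
        funext p; simp [hφdef]
      have hφ1 : (∑ p, Complex.normSq (φ p)) = 1 := by
        have h1 : ∀ p ∈ (Finset.univ : Finset (Fin D × Fin d)),
            Complex.normSq (φ p) = t⁻¹ * t⁻¹ * Complex.normSq (u p) := fun p _ => by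
          rw [hφdef]
          simp only [Complex.normSq_mul, Complex.normSq_ofReal]
        rw [Finset.sum_congr rfl h1, ← Finset.mul_sum, ← norm_sq_vE, ← htdef]
        field_simp
      have hmain := hc φ hφ1 ζ hζ
      have hexpr : ⟪vE φ, vE ((∑ k, (ζ k : ℂ) • K1 k).mulVec φ)⟫_ℂ
          = ∑ k, (ζ k : ℂ) * ∑ p, ∑ q, (starRingEnd ℂ) (φ p) *
              (M k p.1 q.1 * (if p.2 = q.2 then 1 else 0)) * φ q := by
        rw [sum_smul_mulVec, vE_sum, inner_sum]
        refine Finset.sum_congr rfl fun k _ => ?_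
        rw [vE_smul, inner_smul_right, inner_mulVec']
        congr 1
      rw [← hexpr] at hmain
      have key : ⟪vE φ, vE ((∑ k, (ζ k : ℂ) • K1 k).mulVec φ)⟫_ℂ
          = ((t⁻¹ * t⁻¹ : ℝ) : ℂ) * ⟪vE u, vE ((∑ k, (ζ k : ℂ) • K1 k).mulVec u)⟫_ℂ := by
        rw [hφu, Matrix.mulVec_smul, vE_smul, vE_smul, inner_smul_left, inner_smul_right,
          Complex.conj_ofReal]
        push_cast
        ring
      rw [key, Complex.re_ofReal_mul] at hmain
      have hT : (0:ℝ) < t * t := mul_pos ht ht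
      have hle := mul_le_mul_of_nonneg_left hmain hT.le
      have heq : (t * t) * (t⁻¹ * t⁻¹ * (⟪vE u, vE ((∑ k, (ζ k : ℂ) • K1 k).mulVec u)⟫_ℂ).re)
          = (⟪vE u, vE ((∑ k, (ζ k : ℂ) • K1 k).mulVec u)⟫_ℂ).re := by
        field_simp
      rw [heq] at hle
      nlinarith [hle]
  -- norm bound  ‖(A ζ).mulVec ψ‖ ≤ c  for sign vectors coming from booleans
  have hnormA : ∀ s : Fin Q → Bool, ‖vE ((∑ k, (sg (s k) : ℂ) • K1 k).mulVec ψ)‖ ≤ c := by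
    intro s
    set X : Matrix (Fin D × Fin d) (Fin D × Fin d) ℂ := ∑ k, (sg (s k) : ℂ) • K1 k with hXdef
    set y : Fin D × Fin d → ℂ := X.mulVec ψ with hydef
    by_cases hy : y = 0
    · rw [hy]
      have : vE (0 : (Fin D × Fin d) → ℂ) = 0 := rfl
      rw [this, norm_zero]
      exact hc0
    · have ht : 0 < ‖vE y‖ := by
        rw [norm_pos_iff]
        intro h0
        exact hy ((WithLp.toLp_eq_zero 2).1 h0)
      set t : ℝ := ‖vE y‖ with htdef
      set u : Fin D × Fin d → ℂ := fun p => ((t⁻¹ : ℝ) : ℂ) * y p with hudef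
      have hu : vE u = ((t⁻¹ : ℝ) : ℂ) • vE y := by
        rw [hudef]; rfl
      have hnu : ‖vE u‖ = 1 := by
        rw [hu, norm_smul]
        simp only [Complex.norm_real, Real.norm_eq_abs, abs_inv, abs_of_pos ht]
        field_simp
        rfl
      have hre : (⟪vE u, vE y⟫_ℂ).re = t := by
        rw [hu, inner_smul_left, Complex.conj_ofReal, Complex.re_ofReal_mul]
        have : (⟪vE y, vE y⟫_ℂ).re = ‖vE y‖ ^ 2 := by
          rw [← RCLike.re_to_complex]
          exact inner_self_eq_norm_sq (𝕜 := ℂ) (vE y)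
        rw [this, ← htdef]
        field_simp
      have hsym : (⟪vE ψ, vE (X.mulVec u)⟫_ℂ).re = (⟪vE u, vE y⟫_ℂ).re := by
        rw [hydef, ← herm_inner_mulVec X (herm_sum_smul _ _ hK1) ψ u, ← inner_conj_symm]
        exact Complex.conj_re _
      have hexp1 : (⟪vE (u + ψ), vE (X.mulVec (u + ψ))⟫_ℂ).re
          = (⟪vE u, vE (X.mulVec u)⟫_ℂ).re + (⟪vE u, vE y⟫_ℂ).re
            + (⟪vE ψ, vE (X.mulVec u)⟫_ℂ).re + (⟪vE ψ, vE y⟫_ℂ).re := by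
        rw [Matrix.mulVec_add, vE_add, vE_add, inner_add_left, inner_add_right, inner_add_right,
          hydef]
        simp only [Complex.add_re]
        ring
      have hexp2 : (⟪vE (u - ψ), vE (X.mulVec (u - ψ))⟫_ℂ).re
          = (⟪vE u, vE (X.mulVec u)⟫_ℂ).re - (⟪vE u, vE y⟫_ℂ).re
            - (⟪vE ψ, vE (X.mulVec u)⟫_ℂ).re + (⟪vE ψ, vE y⟫_ℂ).re := by
        rw [Matrix.mulVec_sub, vE_sub, vE_sub, inner_sub_left, inner_sub_right, inner_sub_right,
          hydef]
        simp only [Complex.sub_re]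
        ring
      have hq1 := quad (fun k => sg (s k)) (isSign_sg s) (u + ψ)
      have hsneg : IsSign (fun k => -sg (s k)) := by
        intro k
        rcases isSign_sg s k with h | h
        · exact Or.inr (by simp [h])
        · exact Or.inl (by simp [h])
      have hq2 := quad (fun k => -sg (s k)) hsneg (u - ψ)
      have hXneg : (∑ k, ((-sg (s k) : ℝ) : ℂ) • K1 k) = -X := by
        rw [hXdef, ← Finset.sum_neg_distrib]
        refine Finset.sum_congr rfl fun k _ => ?_
        push_cast
        rw [neg_smul]
      rw [hXneg, Matrix.neg_mulVec] at hq2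
      have hvEneg : vE (-(X.mulVec (u - ψ))) = -(vE (X.mulVec (u - ψ))) := rfl
      rw [hvEneg, inner_neg_right, Complex.neg_re] at hq2
      rw [← hXdef] at hq1
      have hpar := parallelogram_law_with_norm ℂ (vE u) (vE ψ)
      have hvadd : vE (u + ψ) = vE u + vE ψ := rfl
      have hvsub : vE (u - ψ) = vE u - vE ψ := rfl
      rw [← hvadd, ← hvsub] at hpar
      rw [hnu, hnormψ] at hpar
      have hq1' : (⟪vE u, vE (X.mulVec u)⟫_ℂ).re + (⟪vE u, vE y⟫_ℂ).re
          + (⟪vE ψ, vE (X.mulVec u)⟫_ℂ).re + (⟪vE ψ, vE y⟫_ℂ).re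
            ≤ c * ‖vE (u + ψ)‖ ^ 2 := by
        rw [← hexp1]; exact hq1
      have hq2' : -((⟪vE u, vE (X.mulVec u)⟫_ℂ).re - (⟪vE u, vE y⟫_ℂ).re
          - (⟪vE ψ, vE (X.mulVec u)⟫_ℂ).re + (⟪vE ψ, vE y⟫_ℂ).re)
            ≤ c * ‖vE (u - ψ)‖ ^ 2 := by
        rw [← hexp2]; exact hq2
      have h4 : ‖vE (u + ψ)‖ ^ 2 + ‖vE (u - ψ)‖ ^ 2 = 4 := by rw [hpar]; norm_num
      have hcsum : c * ‖vE (u + ψ)‖ ^ 2 + c * ‖vE (u - ψ)‖ ^ 2 = 4 * c := by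
        calc c * ‖vE (u + ψ)‖ ^ 2 + c * ‖vE (u - ψ)‖ ^ 2
            = c * (‖vE (u + ψ)‖ ^ 2 + ‖vE (u - ψ)‖ ^ 2) := by ring
          _ = c * 4 := by rw [h4]
          _ = 4 * c := by ring
      linarith [hq1', hq2', hsym, hre, hcsum]
  -- assemble
  have hgoal : (∑ k, ∑ p, ∑ q, (starRingEnd ℂ) (ψ p) * (M k p.1 q.1 * C k p.2 q.2) * ψ q)
      = ∑ k, ⟪a k, b k⟫_ℂ := Finset.sum_congr rfl fun k _ => hab k
  rw [hgoal]
  have hvv : ∀ s : Fin Q → Bool, (∑ k, (sg (s k) : ℂ) • a k)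
      = vE ((∑ k, (sg (s k) : ℂ) • K1 k).mulVec ψ) := by
    intro s
    rw [sum_smul_mulVec, vE_sum]
    rfl
  have havg := sum_signs_inner a b
  have havg2 := sum_signs_inner b b
  set S : ℝ := (∑ k, ⟪a k, b k⟫_ℂ).re with hSdef
  have hterm : ∀ s : Fin Q → Bool,
      (⟪∑ k, (sg (s k) : ℂ) • a k, ∑ k, (sg (s k) : ℂ) • b k⟫_ℂ).re
        ≤ c * ‖(∑ k, (sg (s k) : ℂ) • b k : EuclideanSpace ℂ (Fin D × Fin d))‖ := by
    intro s
    have h1 : (⟪∑ k, (sg (s k) : ℂ) • a k, ∑ k, (sg (s k) : ℂ) • b k⟫_ℂ).re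
        ≤ ‖(∑ k, (sg (s k) : ℂ) • a k : EuclideanSpace ℂ (Fin D × Fin d))‖
          * ‖(∑ k, (sg (s k) : ℂ) • b k : EuclideanSpace ℂ (Fin D × Fin d))‖ := by
      have := re_inner_le_norm (𝕜 := ℂ) (∑ k, (sg (s k) : ℂ) • a k) (∑ k, (sg (s k) : ℂ) • b k)
      rwa [RCLike.re_to_complex] at this
    refine h1.trans ?_
    apply mul_le_mul_of_nonneg_right _ (norm_nonneg _)
    rw [hvv s]
    exact hnormA s
  have hpow : (0:ℝ) < 2 ^ Q := by positivity
  have h2Q : ((2:ℂ) ^ Q).re = (2:ℝ) ^ Q := by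
    have : ((2:ℂ) ^ Q) = (((2:ℝ) ^ Q : ℝ) : ℂ) := by push_cast; ring
    rw [this, Complex.ofReal_re]
  have hsum1 : (2 ^ Q : ℝ) * S
      ≤ c * ∑ s : Fin Q → Bool, ‖(∑ k, (sg (s k) : ℂ) • b k : EuclideanSpace ℂ (Fin D × Fin d))‖ := by
    have hre1 : (2 ^ Q : ℝ) * S
        = (∑ s : Fin Q → Bool, ⟪∑ k, (sg (s k) : ℂ) • a k, ∑ k, (sg (s k) : ℂ) • b k⟫_ℂ).re := by
      rw [havg, Complex.mul_re, h2Q]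
      have : ((2:ℂ) ^ Q).im = 0 := by
        have : ((2:ℂ) ^ Q) = (((2:ℝ) ^ Q : ℝ) : ℂ) := by push_cast; ring
        rw [this, Complex.ofReal_im]
      rw [this, hSdef]
      ring
    rw [hre1, Complex.re_sum, Finset.mul_sum]
    exact Finset.sum_le_sum fun s _ => hterm s
  have hwsq : ∑ s : Fin Q → Bool,
      ‖(∑ k, (sg (s k) : ℂ) • b k : EuclideanSpace ℂ (Fin D × Fin d))‖ ^ 2
        = (2 ^ Q : ℝ) * Q := by
    have h1 : ∀ s : Fin Q → Bool,
        ‖(∑ k, (sg (s k) : ℂ) • b k : EuclideanSpace ℂ (Fin D × Fin d))‖ ^ 2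
          = (⟪∑ k, (sg (s k) : ℂ) • b k, ∑ k, (sg (s k) : ℂ) • b k⟫_ℂ).re := by
      intro s
      rw [← RCLike.re_to_complex]
      exact (inner_self_eq_norm_sq (𝕜 := ℂ) _).symm
    rw [Finset.sum_congr rfl fun s _ => h1 s, ← Complex.re_sum, havg2]
    have hsum : (∑ k, ⟪b k, b k⟫_ℂ) = (Q : ℂ) := by
      rw [Finset.sum_congr rfl fun k _ => hbk k]
      simp
    rw [hsum, Complex.mul_re, h2Q]
    have him : ((2:ℂ) ^ Q).im = 0 := by
      have : ((2:ℂ) ^ Q) = (((2:ℝ) ^ Q : ℝ) : ℂ) := by push_cast; ring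
      rw [this, Complex.ofReal_im]
    rw [him]
    simp
  have hCS : ∑ s : Fin Q → Bool,
      ‖(∑ k, (sg (s k) : ℂ) • b k : EuclideanSpace ℂ (Fin D × Fin d))‖
        ≤ Real.sqrt (2 ^ Q) * Real.sqrt ((2 ^ Q) * Q) := by
    have h := Real.sum_mul_le_sqrt_mul_sqrt (Finset.univ : Finset (Fin Q → Bool))
      (fun _ => 1)
      (fun s => ‖(∑ k, (sg (s k) : ℂ) • b k : EuclideanSpace ℂ (Fin D × Fin d))‖)
    simp only [one_mul, one_pow] at h
    have hcard : (∑ _s : Fin Q → Bool, (1:ℝ)) = 2 ^ Q := by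
      rw [Finset.sum_const, Finset.card_univ, Fintype.card_fun]
      simp
    rw [hcard, hwsq] at h
    exact h
  have hsqrt : Real.sqrt (2 ^ Q) * Real.sqrt ((2 ^ Q) * Q) = (2 ^ Q : ℝ) * Real.sqrt Q := by
    rw [Real.sqrt_mul (le_of_lt hpow), ← mul_assoc, Real.mul_self_sqrt (le_of_lt hpow)]
  have hfinal : (2 ^ Q : ℝ) * S ≤ (2 ^ Q : ℝ) * (Real.sqrt Q * c) := by
    calc (2 ^ Q : ℝ) * S ≤ c * ∑ s : Fin Q → Bool,
          ‖(∑ k, (sg (s k) : ℂ) • b k : EuclideanSpace ℂ (Fin D × Fin d))‖ := hsum1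
      _ ≤ c * (Real.sqrt (2 ^ Q) * Real.sqrt ((2 ^ Q) * Q)) :=
          mul_le_mul_of_nonneg_left hCS hc0
      _ = (2 ^ Q : ℝ) * (Real.sqrt Q * c) := by rw [hsqrt]; ring
  exact le_of_mul_le_mul_left hfinal hpow
end
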